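/- arXiv:2308.03697 — 9 statements merged into one kernel-verified Lean document; each statement's English description precedes it below -/
import Mathlib

section
/- Let M be a metric space. The function d on pairs of Jordan domains in M, defined by d(D₁, D₂) := the infimum over all parametrizations f₁ of D₁ and f₂ of D₂ of sup_{p ∈ B²} dist(f₁ p, f₂ p), is a metric on the collection of Jordan domains in M: d(D₁,D₂) is a finite nonnegative real number, d(D,D) = 0, d(D₁,D₂) = d(D₂,D₁), d(D₁,D₃) ≤ d(D₁,D₂) + d(D₂,D₃), and d(D₁,D₂) = 0 implies D₁ = D₂. -/
noncomputable section

/-- The Euclidean plane. -/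
abbrev Plane := EuclideanSpace ℝ (Fin 2)

/-- The closed unit disk in the Euclidean plane. -/
def B2 : Set Plane := Metric.closedBall 0 1

/-- `f` is a parametrization of `D`: a continuous injective map of the closed unit disk
onto `D`. -/
def IsParam {M : Type*} [MetricSpace M] (f : Plane → M) (D : Set M) : Prop :=
  ContinuousOn f B2 ∧ Set.InjOn f B2 ∧ f '' B2 = D

/-- A Jordan domain in a metric space `M` is the image of a continuous injective map
of the closed unit disk. -/
def IsJordanDomain {M : Type*} [MetricSpace M] (D : Set M) : Prop :=
  ∃ f, IsParam f D

/-- The set of candidate values for the distance between two Jordan domains. -/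
def jdistSet {M : Type*} [MetricSpace M] (D₁ D₂ : Set M) : Set ℝ :=
  { r | ∃ f₁ f₂, IsParam f₁ D₁ ∧ IsParam f₂ D₂ ∧
      r = sSup ((fun p => dist (f₁ p) (f₂ p)) '' B2) }

/-- The distance between Jordan domains: the infimum over parametrizations of the sup
distance. -/
noncomputable def jdist {M : Type*} [MetricSpace M] (D₁ D₂ : Set M) : ℝ :=
  sInf (jdistSet D₁ D₂)

open Set Metric

lemma B2_compact : IsCompact B2 := isCompact_closedBall 0 1

lemma zero_mem_B2 : (0 : Plane) ∈ B2 := mem_closedBall_self zero_le_one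

lemma B2_ne : B2.Nonempty := ⟨0, zero_mem_B2⟩

section aux

variable {M : Type*} [MetricSpace M]

lemma distSet_bddAbove {f₁ f₂ : Plane → M} (h₁ : ContinuousOn f₁ B2)
    (h₂ : ContinuousOn f₂ B2) :
    BddAbove ((fun p => dist (f₁ p) (f₂ p)) '' B2) :=
  (B2_compact.image_of_continuousOn (continuous_dist.comp_continuousOn (h₁.prodMk h₂))).bddAbove

lemma le_supDist {f₁ f₂ : Plane → M} (h₁ : ContinuousOn f₁ B2)
    (h₂ : ContinuousOn f₂ B2) {p : Plane} (hp : p ∈ B2) :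
    dist (f₁ p) (f₂ p) ≤ sSup ((fun p => dist (f₁ p) (f₂ p)) '' B2) :=
  le_csSup (distSet_bddAbove h₁ h₂) (Set.mem_image_of_mem _ hp)

lemma supDist_nonneg {f₁ f₂ : Plane → M} (h₁ : ContinuousOn f₁ B2)
    (h₂ : ContinuousOn f₂ B2) :
    0 ≤ sSup ((fun p => dist (f₁ p) (f₂ p)) '' B2) :=
  le_trans dist_nonneg (le_supDist h₁ h₂ zero_mem_B2)

lemma jdistSet_nonneg {D₁ D₂ : Set M} {r : ℝ} (hr : r ∈ jdistSet D₁ D₂) : 0 ≤ r := by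
  obtain ⟨f₁, f₂, hf₁, hf₂, rfl⟩ := hr
  exact supDist_nonneg hf₁.1 hf₂.1

lemma jdistSet_bddBelow (D₁ D₂ : Set M) : BddBelow (jdistSet D₁ D₂) :=
  ⟨0, fun _ hr => jdistSet_nonneg hr⟩

lemma jdistSet_nonempty {D₁ D₂ : Set M} (h₁ : IsJordanDomain D₁)
    (h₂ : IsJordanDomain D₂) : (jdistSet D₁ D₂).Nonempty := by
  obtain ⟨f₁, hf₁⟩ := h₁
  obtain ⟨f₂, hf₂⟩ := h₂
  exact ⟨_, f₁, f₂, hf₁, hf₂, rfl⟩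

lemma jdist_nonneg (D₁ D₂ : Set M) : 0 ≤ jdist D₁ D₂ := by
  rcases (jdistSet D₁ D₂).eq_empty_or_nonempty with h | h
  · simp [jdist, h, Real.sInf_empty]
  · exact le_csInf h fun r hr => jdistSet_nonneg hr

end aux

section reparam

variable {M : Type*} [MetricSpace M]

/-- A parametrization gives a homeomorphism from `B2` onto `D`. -/
lemma param_homeo {f : Plane → M} {D : Set M} (hf : IsParam f D) :
    ∃ Φ : B2 ≃ₜ D, ∀ x : B2, (Φ x : M) = f x := by
  obtain ⟨hc, hinj, himg⟩ := hf
  have hmem : ∀ x : B2, f x ∈ D := fun x => himg ▸ Set.mem_image_of_mem f x.2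
  have hbij : Function.Bijective (fun x : B2 => (⟨f x, hmem x⟩ : D)) := by
    constructor
    · intro x y hxy
      exact Subtype.ext (hinj x.2 y.2 (congrArg Subtype.val hxy))
    · rintro ⟨y, hy⟩
      rw [← himg] at hy
      obtain ⟨x, hx, hxy⟩ := hy
      exact ⟨⟨x, hx⟩, Subtype.ext hxy⟩
  have hcont : Continuous (Equiv.ofBijective _ hbij) := by
    exact (continuousOn_iff_continuous_restrict.mp hc).subtype_mk _
  haveI : CompactSpace B2 := isCompact_iff_compactSpace.mp B2_compact
  exact ⟨hcont.homeoOfEquivCompactToT2, fun x => rfl⟩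

/-- Two parametrizations of the same Jordan domain differ by a homeomorphism of `B2`. -/
lemma reparam {f g : Plane → M} {D : Set M} (hf : IsParam f D) (hg : IsParam g D) :
    ∃ φ : B2 ≃ₜ B2, ∀ x : B2, g (φ x) = f x := by
  obtain ⟨Φf, hΦf⟩ := param_homeo hf
  obtain ⟨Φg, hΦg⟩ := param_homeo hg
  refine ⟨Φf.trans Φg.symm, fun x => ?_⟩
  have : (Φg (Φg.symm (Φf x)) : M) = (Φf x : M) := by rw [Φg.apply_symm_apply]
  rw [← hΦf x, ← this, hΦg]
  rfl

/-- Composing a parametrization with a homeomorphism of `B2` yields a parametrization. -/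
lemma param_comp {g F : Plane → M} {D : Set M} (hg : IsParam g D) (φ : B2 ≃ₜ B2)
    (hFval : ∀ (p : Plane) (hp : p ∈ B2), F p = g (φ ⟨p, hp⟩)) :
    IsParam F D := by
  obtain ⟨hc, hinj, himg⟩ := hg
  refine ⟨?_, ?_, ?_⟩
  · rw [continuousOn_iff_continuous_restrict]
    have : B2.restrict F = fun x : B2 => (B2.restrict g) (φ x) := by
      funext x
      simp [Set.restrict, hFval x x.2]
    change Continuous (B2.restrict F)
    rw [this]
    exact (continuousOn_iff_continuous_restrict.mp hc).comp φ.continuous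
  · intro p hp q hq hpq
    rw [hFval p hp, hFval q hq] at hpq
    have := φ.injective (Subtype.ext (hinj (φ ⟨p, hp⟩).2 (φ ⟨q, hq⟩).2 hpq).symm).symm
    exact congrArg Subtype.val this
  · rw [← himg]
    ext y
    constructor
    · rintro ⟨p, hp, rfl⟩
      exact ⟨φ ⟨p, hp⟩, (φ ⟨p, hp⟩).2, (hFval p hp).symm⟩
    · rintro ⟨q, hq, rfl⟩
      refine ⟨φ.symm ⟨q, hq⟩, (φ.symm ⟨q, hq⟩).2, ?_⟩
      rw [hFval _ (φ.symm ⟨q, hq⟩).2]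
      congr 1
      rw [Subtype.coe_eta, φ.apply_symm_apply]

end reparam

section main

variable {M : Type*} [MetricSpace M]

lemma jdist_le_add {D₁ D₂ D₃ : Set M} {r s : ℝ} (hr : r ∈ jdistSet D₁ D₂)
    (hs : s ∈ jdistSet D₂ D₃) : jdist D₁ D₃ ≤ r + s := by
  classical
  obtain ⟨f₁, f₂, hf₁, hf₂, rfl⟩ := hr
  obtain ⟨g₂, g₃, hg₂, hg₃, rfl⟩ := hs
  obtain ⟨φ, hφ⟩ := reparam hf₂ hg₂
  set F : Plane → M := fun p => if hp : p ∈ B2 then g₃ (φ ⟨p, hp⟩) else g₃ p with hFdef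
  have hFval : ∀ (p : Plane) (hp : p ∈ B2), F p = g₃ (φ ⟨p, hp⟩) := by
    intro p hp; simp [hFdef, hp]
  have hF : IsParam F D₃ := param_comp hg₃ φ hFval
  have hmem : sSup ((fun p => dist (f₁ p) (F p)) '' B2) ∈ jdistSet D₁ D₃ :=
    ⟨f₁, F, hf₁, hF, rfl⟩
  refine le_trans (csInf_le (jdistSet_bddBelow _ _) hmem) ?_
  refine csSup_le (B2_ne.image _) ?_
  rintro t ⟨p, hp, rfl⟩
  have h1 : dist (f₁ p) (F p) ≤ dist (f₁ p) (f₂ p) + dist (f₂ p) (F p) := dist_triangle _ _ _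
  have h2 : dist (f₁ p) (f₂ p) ≤ sSup ((fun p => dist (f₁ p) (f₂ p)) '' B2) :=
    le_supDist hf₁.1 hf₂.1 hp
  have h3 : dist (f₂ p) (F p) = dist (g₂ (φ ⟨p, hp⟩)) (g₃ (φ ⟨p, hp⟩)) := by
    rw [hFval p hp, hφ ⟨p, hp⟩]
  have h4 : dist (g₂ ((φ ⟨p, hp⟩ : B2) : Plane)) (g₃ ((φ ⟨p, hp⟩ : B2) : Plane)) ≤
      sSup ((fun p => dist (g₂ p) (g₃ p)) '' B2) :=
    le_supDist hg₂.1 hg₃.1 (φ ⟨p, hp⟩).2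
  calc dist (f₁ p) (F p) ≤ dist (f₁ p) (f₂ p) + dist (f₂ p) (F p) := h1
    _ ≤ _ := by rw [h3]; exact add_le_add h2 h4

lemma jdistSet_comm (D₁ D₂ : Set M) : jdistSet D₁ D₂ = jdistSet D₂ D₁ := by
  ext r
  constructor <;>
  · rintro ⟨f₁, f₂, hf₁, hf₂, rfl⟩
    exact ⟨f₂, f₁, hf₂, hf₁, by simp [dist_comm]⟩

end main

/-- `jdist` is a metric on the collection of Jordan domains in a metric space `M`:
it is a well-defined (finite) nonnegative real number, vanishes on the diagonal,
is symmetric, satisfies the triangle inequality, and separates points. -/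
theorem jdist_is_metric {M : Type*} [MetricSpace M]
    (D D₁ D₂ D₃ : Set M) (hD : IsJordanDomain D) (h₁ : IsJordanDomain D₁)
    (h₂ : IsJordanDomain D₂) (h₃ : IsJordanDomain D₃) :
    (jdistSet D₁ D₂).Nonempty ∧ BddBelow (jdistSet D₁ D₂) ∧
    0 ≤ jdist D₁ D₂ ∧
    jdist D D = 0 ∧
    jdist D₁ D₂ = jdist D₂ D₁ ∧
    jdist D₁ D₃ ≤ jdist D₁ D₂ + jdist D₂ D₃ ∧
    (jdist D₁ D₂ = 0 → D₁ = D₂) := by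
  refine ⟨jdistSet_nonempty h₁ h₂, jdistSet_bddBelow _ _, jdist_nonneg _ _, ?_, ?_, ?_, ?_⟩
  · -- jdist D D = 0
    obtain ⟨f, hf⟩ := hD
    have h0 : (0 : ℝ) ∈ jdistSet D D := by
      refine ⟨f, f, hf, hf, ?_⟩
      have : (fun p => dist (f p) (f p)) '' B2 = {0} := by
        ext x
        simp only [Set.mem_image, dist_self, Set.mem_singleton_iff]
        exact ⟨fun ⟨p, _, h⟩ => h.symm, fun h => ⟨0, zero_mem_B2, h.symm⟩⟩
      rw [this, csSup_singleton]
    exact le_antisymm (csInf_le (jdistSet_bddBelow _ _) h0) (jdist_nonneg _ _)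
  · rw [jdist, jdist, jdistSet_comm]
  · -- triangle
    have hA := jdistSet_nonempty h₁ h₂
    have hB := jdistSet_nonempty h₂ h₃
    have key : ∀ r ∈ jdistSet D₁ D₂, jdist D₁ D₃ - jdist D₂ D₃ ≤ r := by
      intro r hr
      have : jdist D₁ D₃ - r ≤ jdist D₂ D₃ :=
        le_csInf hB fun s hs => by linarith [jdist_le_add hr hs]
      linarith
    have h := le_csInf hA key
    simp only [jdist] at h ⊢
    linarith
  · -- separation
    intro h0
    obtain ⟨f₂', hf₂'⟩ := h₂
    obtain ⟨f₁', hf₁'⟩ := h₁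
    have hclosed₁ : IsClosed D₁ := by
      rw [← hf₁'.2.2]; exact (B2_compact.image_of_continuousOn hf₁'.1).isClosed
    have hclosed₂ : IsClosed D₂ := by
      rw [← hf₂'.2.2]; exact (B2_compact.image_of_continuousOn hf₂'.1).isClosed
    have hne₁ : D₁.Nonempty := by rw [← hf₁'.2.2]; exact B2_ne.image _
    have hne₂ : D₂.Nonempty := by rw [← hf₂'.2.2]; exact B2_ne.image _
    have hinf : ∀ ε > 0, ∃ r ∈ jdistSet D₁ D₂, r < ε := by
      intro ε hε
      have : sInf (jdistSet D₁ D₂) < ε := by rw [← jdist, h0]; exact hε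
      exact exists_lt_of_csInf_lt ⟨_, f₁', f₂', hf₁', hf₂', rfl⟩ this
    have hsub : ∀ {E₁ E₂ : Set M}, (∀ ε > 0, ∃ f₁ f₂ : Plane → M, IsParam f₁ E₁ ∧
        IsParam f₂ E₂ ∧ ∀ p ∈ B2, dist (f₁ p) (f₂ p) < ε) → IsClosed E₂ → E₂.Nonempty →
        E₁ ⊆ E₂ := by
      intro E₁ E₂ hE hcl hn x hx
      rw [hcl.mem_iff_infDist_zero hn]
      refine le_antisymm ?_ infDist_nonneg
      by_contra hlt
      push_neg at hlt
      obtain ⟨f₁, f₂, hf₁, hf₂, hd⟩ := hE _ hlt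
      rw [← hf₁.2.2] at hx
      obtain ⟨p, hp, rfl⟩ := hx
      have hmem : f₂ p ∈ E₂ := hf₂.2.2 ▸ Set.mem_image_of_mem f₂ hp
      exact absurd (infDist_le_dist_of_mem hmem) (not_le.mpr (hd p hp))
    have hεparam : ∀ ε > 0, ∃ f₁ f₂ : Plane → M, IsParam f₁ D₁ ∧ IsParam f₂ D₂ ∧
        ∀ p ∈ B2, dist (f₁ p) (f₂ p) < ε := by
      intro ε hε
      obtain ⟨r, ⟨f₁, f₂, hf₁, hf₂, rfl⟩, hrε⟩ := hinf ε hε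
      exact ⟨f₁, f₂, hf₁, hf₂, fun p hp =>
        lt_of_le_of_lt (le_supDist hf₁.1 hf₂.1 hp) hrε⟩
    have hεparam' : ∀ ε > 0, ∃ f₁ f₂ : Plane → M, IsParam f₁ D₂ ∧ IsParam f₂ D₁ ∧
        ∀ p ∈ B2, dist (f₁ p) (f₂ p) < ε := by
      intro ε hε
      obtain ⟨f₁, f₂, hf₁, hf₂, hd⟩ := hεparam ε hε
      exact ⟨f₂, f₁, hf₂, hf₁, fun p hp => dist_comm (f₁ p) (f₂ p) ▸ hd p hp⟩
    exact Set.Subset.antisymm (hsub hεparam hclosed₂ hne₂) (hsub hεparam' hclosed₁ hne₁)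
end
end

section
/- Let G be a group of bijections of ℝ² = EuclideanSpace ℝ (Fin 2) (closed under composition and inverses) such that every g ∈ G is a similarity, i.e., there exists r > 0 with dist(g(x), g(y)) = r · dist(x, y) for all x, y ∈ ℝ². Suppose that for every compact set K ⊆ ℝ² and every point x₁ ∈ ℝ², the set {g(x₁) : g ∈ G and (g '' K) ∩ K ≠ ∅} is bounded. Then every g ∈ G is an isometry: dist(g(x), g(y)) = dist(x, y) for all x, y ∈ ℝ². -/
noncomputable section

/-- If a contraction belongs to a properly acting group, contradiction. -/
lemma aux_ratio_ge_one
    (G : Set (Plane ≃ Plane))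
    (hcomp : ∀ g ∈ G, ∀ h ∈ G, g.trans h ∈ G)
    (hinv : ∀ g ∈ G, g.symm ∈ G)
    (hproper : ∀ K : Set Plane, IsCompact K → ∀ x₁ : Plane,
      Bornology.IsBounded {p : Plane | ∃ g ∈ G, (⇑g '' K ∩ K).Nonempty ∧ p = g x₁})
    (g : Plane ≃ Plane) (hg : g ∈ G) (r : ℝ) (hr : 0 < r)
    (hdist : ∀ x y, dist (g x) (g y) = r * dist x y) : 1 ≤ r := by
  by_contra hlt
  push_neg at hlt
  -- g is a contraction, with fixed point p
  have hlip : LipschitzWith r.toNNReal ⇑g := by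
    apply LipschitzWith.of_dist_le_mul
    intro x y
    rw [hdist x y, Real.coe_toNNReal r hr.le]
  have hc : ContractingWith r.toNNReal ⇑g := by
    constructor
    · rw [← NNReal.coe_lt_coe, Real.coe_toNNReal r hr.le]; exact hlt
    · exact hlip
  set p : Plane := ContractingWith.fixedPoint ⇑g hc with hp
  have hfix : g p = p := hc.fixedPoint_isFixedPt
  -- g.symm expands by r⁻¹ and fixes p
  have hsymm : ∀ x y : Plane, dist (g.symm x) (g.symm y) = r⁻¹ * dist x y := by
    intro x y
    have := hdist (g.symm x) (g.symm y)
    rw [g.apply_symm_apply, g.apply_symm_apply] at this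
    field_simp [this]
    rw [this]; ring
  have hsymmfix : g.symm p = p := by
    conv_lhs => rw [← hfix]
    exact g.symm_apply_apply p
  -- iterates of g.symm
  let k : ℕ → (Plane ≃ Plane) := fun n => Nat.rec (g.trans g.symm) (fun _ e => e.trans g.symm) n
  have hk0 : k 0 = g.trans g.symm := rfl
  have hks : ∀ n, k (n + 1) = (k n).trans g.symm := fun n => rfl
  have hkG : ∀ n, k n ∈ G := by
    intro n
    induction n with
    | zero => exact hcomp g hg g.symm (hinv g hg)
    | succ n ih => exact hcomp (k n) ih g.symm (hinv g hg)
  have hkfix : ∀ n, k n p = p := by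
    intro n
    induction n with
    | zero => simp [hk0, hfix, g.symm_apply_apply]
    | succ n ih => rw [hks n]; simp [ih, hsymmfix]
  obtain ⟨x₁, hx₁⟩ := exists_ne p
  have hd : 0 < dist x₁ p := dist_pos.mpr hx₁
  have hkdist : ∀ n, dist (k n x₁) p = (r⁻¹) ^ n * dist x₁ p := by
    intro n
    induction n with
    | zero =>
      simp [hk0, Equiv.trans_apply, g.symm_apply_apply]
    | succ n ih =>
      rw [hks n]
      simp only [Equiv.trans_apply]
      calc dist (g.symm (k n x₁)) p = dist (g.symm (k n x₁)) (g.symm p) := by rw [hsymmfix]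
        _ = r⁻¹ * dist (k n x₁) p := hsymm _ _
        _ = r⁻¹ * ((r⁻¹) ^ n * dist x₁ p) := by rw [ih]
        _ = (r⁻¹) ^ (n + 1) * dist x₁ p := by ring
  -- properness with K = {p}
  have hbd := hproper {p} isCompact_singleton x₁
  obtain ⟨R, hR⟩ := (Metric.isBounded_iff_subset_closedBall p).mp hbd
  have hmem : ∀ n, k n x₁ ∈ Metric.closedBall p R := by
    intro n
    apply hR
    refine ⟨k n, hkG n, ⟨p, ⟨p, rfl, hkfix n⟩, rfl⟩, rfl⟩
  have hone : 1 < r⁻¹ := (one_lt_inv₀ hr).mpr hlt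
  obtain ⟨n, hn⟩ := pow_unbounded_of_one_lt (R / dist x₁ p) hone
  have h1 : R < (r⁻¹) ^ n * dist x₁ p := by
    rw [div_lt_iff₀ hd] at hn
    linarith
  have h2 := hmem n
  rw [Metric.mem_closedBall, hkdist n] at h2
  linarith

/-- A group of similarities of the plane acting properly consists of isometries. -/
theorem proper_similarity_group_is_isometric
    (G : Set (Plane ≃ Plane))
    (hcomp : ∀ g ∈ G, ∀ h ∈ G, g.trans h ∈ G)
    (hinv : ∀ g ∈ G, g.symm ∈ G)
    (hsim : ∀ g ∈ G, ∃ r > (0:ℝ), ∀ x y, dist (g x) (g y) = r * dist x y)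
    (hproper : ∀ K : Set Plane, IsCompact K → ∀ x₁ : Plane,
      Bornology.IsBounded {p : Plane | ∃ g ∈ G, (⇑g '' K ∩ K).Nonempty ∧ p = g x₁}) :
    ∀ g ∈ G, ∀ x y, dist (g x) (g y) = dist x y := by
  intro g hg x y
  obtain ⟨r, hr, hdist⟩ := hsim g hg
  have h1 : 1 ≤ r := aux_ratio_ge_one G hcomp hinv hproper g hg r hr hdist
  have hsymm : ∀ a b : Plane, dist (g.symm a) (g.symm b) = r⁻¹ * dist a b := by
    intro a b
    have := hdist (g.symm a) (g.symm b)
    rw [g.apply_symm_apply, g.apply_symm_apply] at this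
    field_simp [this]
    rw [this]; ring
  have h2 : 1 ≤ r⁻¹ :=
    aux_ratio_ge_one G hcomp hinv hproper g.symm (hinv g hg) r⁻¹ (inv_pos.mpr hr) hsymm
  have : r = 1 := le_antisymm (by simpa using (one_le_inv₀ hr).mp h2) h1
  rw [hdist, this, one_mul]
end
end

section
/- Let K be a nonempty compact subset of ℝ² = EuclideanSpace ℝ (Fin 2), and let R := sInf {s : ℝ | 0 ≤ s ∧ ∃ x, K ⊆ Metric.closedBall x s} be the circumradius of K. Then: (i) there exists x₀ ∈ ℝ² with K ⊆ Metric.closedBall x₀ R (the infimum is attained); (ii) this x₀ is unique: if K ⊆ Metric.closedBall x R and K ⊆ Metric.closedBall y R then x = y. That is, every nonempty compact subset of the Euclidean plane has a unique smallest circumscribing closed ball. -/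
noncomputable section

lemma dist_midpoint_sq' (p x y : Plane) :
    dist p (midpoint ℝ x y) ^ 2 =
      (dist p x ^ 2 + dist p y ^ 2) / 2 - dist x y ^ 2 / 4 := by
  have h : p - midpoint ℝ x y = (2:ℝ)⁻¹ • ((p - x) + (p - y)) := by
    rw [midpoint_eq_smul_add, invOf_eq_inv]; module
  have hpar := parallelogram_law_with_norm ℝ (p - x) (p - y)
  have hxy : dist x y = ‖(p - x) - (p - y)‖ := by
    rw [dist_eq_norm, ← norm_neg]; congr 1; abel
  rw [dist_eq_norm, dist_eq_norm, dist_eq_norm, h, norm_smul, hxy]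
  simp only [norm_inv, Real.norm_ofNat]
  nlinarith [norm_nonneg ((p-x)+(p-y)), norm_nonneg ((p-x)-(p-y))]

/-- Every nonempty compact subset of the Euclidean plane has a unique smallest
circumscribing closed ball. -/
theorem exists_unique_circumcenter
    (K : Set Plane) (hne : K.Nonempty) (hK : IsCompact K)
    (R : ℝ) (hR : R = sInf {s : ℝ | 0 ≤ s ∧ ∃ x : Plane, K ⊆ Metric.closedBall x s}) :
    (∃ x₀ : Plane, K ⊆ Metric.closedBall x₀ R) ∧
    (∀ x y : Plane, K ⊆ Metric.closedBall x R → K ⊆ Metric.closedBall y R → x = y) := by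
  obtain ⟨p₀, hp₀⟩ := hne
  set S := {s : ℝ | 0 ≤ s ∧ ∃ x : Plane, K ⊆ Metric.closedBall x s} with hS
  set f : Plane → ℝ := fun x => sSup ((dist x) '' K) with hf
  have hne' : ∀ x : Plane, ((dist x) '' K).Nonempty := fun x => ⟨_, ⟨p₀, hp₀, rfl⟩⟩
  have hbd : ∀ x : Plane, BddAbove ((dist x) '' K) := fun x =>
    (hK.image (Continuous.dist continuous_const continuous_id)).bddAbove
  have hle : ∀ x : Plane, ∀ p ∈ K, dist x p ≤ f x := fun x p hp =>
    le_csSup (hbd x) ⟨p, hp, rfl⟩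
  have hsup : ∀ (x : Plane) (s : ℝ), (∀ p ∈ K, dist x p ≤ s) → f x ≤ s := fun x s hs =>
    csSup_le (hne' x) (by rintro _ ⟨p, hp, rfl⟩; exact hs p hp)
  have hball : ∀ (x : Plane) (s : ℝ), f x ≤ s → K ⊆ Metric.closedBall x s := by
    intro x s h p hp
    exact Metric.mem_closedBall.2 (by rw [dist_comm]; exact (hle x p hp).trans h)
  have hball' : ∀ (x : Plane) (s : ℝ), K ⊆ Metric.closedBall x s → f x ≤ s := by
    intro x s h
    exact hsup x s fun p hp => by rw [dist_comm]; exact Metric.mem_closedBall.1 (h hp)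
  have hf0 : ∀ x : Plane, 0 ≤ f x := fun x => dist_nonneg.trans (hle x p₀ hp₀)
  -- f is 1-Lipschitz hence continuous
  have hlip : LipschitzWith 1 f := by
    apply LipschitzWith.of_le_add
    intro x y
    exact hsup x _ fun p hp => (dist_triangle x y p).trans (by
      have := hle y p hp; linarith)
  have hcont : Continuous f := hlip.continuous
  -- minimize f on a compact ball
  obtain ⟨x₀, hx₀mem, hx₀min⟩ :=
    (isCompact_closedBall p₀ (2 * f p₀ + 1)).exists_isMinOn
      ⟨p₀, Metric.mem_closedBall_self (by have := hf0 p₀; linarith)⟩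
      hcont.continuousOn
  have hglobal : ∀ x : Plane, f x₀ ≤ f x := by
    intro x
    by_cases hx : x ∈ Metric.closedBall p₀ (2 * f p₀ + 1)
    · exact hx₀min hx
    · have h1 : 2 * f p₀ + 1 < dist x p₀ := by
        simpa [Metric.mem_closedBall] using hx
      have h2 : f x₀ ≤ f p₀ := hx₀min (Metric.mem_closedBall_self (by have := hf0 p₀; linarith))
      have h3 : dist x p₀ ≤ f x := hle x p₀ hp₀
      have h4 := hf0 p₀
      linarith
  have hSne : S.Nonempty := ⟨f p₀, hf0 p₀, p₀, hball p₀ _ le_rfl⟩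
  have hSbd : BddBelow S := ⟨0, fun s hs => hs.1⟩
  have hfR : f x₀ ≤ R := by
    rw [hR]
    refine le_csInf hSne ?_
    rintro s ⟨hs0, x, hx⟩
    exact (hglobal x).trans (hball' x s hx)
  have hRle : ∀ x : Plane, K ⊆ Metric.closedBall x R → R ≤ f x := by
    intro x hx
    rw [hR]
    exact csInf_le hSbd ⟨(hf0 x).trans le_rfl |>.trans le_rfl |> fun _ => hf0 x, x, hball x _ le_rfl⟩
  have hR0 : 0 ≤ R := hR ▸ le_csInf hSne fun s hs => hs.1
  constructor
  · exact ⟨x₀, hball x₀ R hfR⟩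
  · intro x y hx hy
    by_contra hxy
    have hd : 0 < dist x y := dist_pos.2 hxy
    set m := midpoint ℝ x y with hm
    have key : ∀ p ∈ K, dist m p ^ 2 ≤ R ^ 2 - dist x y ^ 2 / 4 := by
      intro p hp
      have h1 : dist p x ≤ R := Metric.mem_closedBall.1 (hx hp)
      have h2 : dist p y ≤ R := Metric.mem_closedBall.1 (hy hp)
      have := dist_midpoint_sq' p x y
      rw [dist_comm m p]
      nlinarith [dist_nonneg (x := p) (y := x), dist_nonneg (x := p) (y := y)]
    have harg : 0 ≤ R ^ 2 - dist x y ^ 2 / 4 :=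
      (sq_nonneg (dist m p₀)).trans (key p₀ hp₀)
    set r := Real.sqrt (R ^ 2 - dist x y ^ 2 / 4) with hr
    have hfm : f m ≤ r := by
      apply hsup
      intro p hp
      have h := Real.sqrt_le_sqrt (key p hp)
      rwa [Real.sqrt_sq dist_nonneg] at h
    have hRr : R ≤ r := by
      have : R ≤ f m := hR ▸ csInf_le hSbd ⟨hf0 m, m, hball m _ le_rfl⟩
      exact this.trans hfm
    have : R ^ 2 ≤ R ^ 2 - dist x y ^ 2 / 4 := by
      have := Real.sq_sqrt harg
      nlinarith
    nlinarith
end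
end

section
/- Let K be a nonempty compact subset of ℝ² = EuclideanSpace ℝ (Fin 2), let R be its circumradius and x₀ its circumcenter, i.e., K ⊆ Metric.closedBall x₀ R and R ≤ s whenever K ⊆ Metric.closedBall y s. Let r > 0 and let K_r := {a + b : a ∈ K, b ∈ Metric.closedBall 0 r} be the Minkowski sum of K with the closed ball of radius r. Then K_r ⊆ Metric.closedBall x₀ (R + r); moreover R + r is the circumradius of K_r (if K_r ⊆ Metric.closedBall y s then R + r ≤ s), and x₀ is the circumcenter of K_r (if K_r ⊆ Metric.closedBall y (R + r) then y = x₀). In other words, the smallest circumscribing ball of K + rB² is concentric with that of K. -/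
noncomputable section

lemma circum_key (K : Set Plane) (r s : ℝ) (hr : 0 < r) (y : Plane)
    (Kr : Set Plane)
    (hKr : Kr = {p : Plane | ∃ a ∈ K, ∃ b ∈ Metric.closedBall (0 : Plane) r, p = a + b})
    (h : Kr ⊆ Metric.closedBall y s) :
    K ⊆ Metric.closedBall y (s - r) := by
  intro a ha
  have key : dist a y + r ≤ s := by
    by_cases hay : a = y
    · have hb : (r • EuclideanSpace.single (0 : Fin 2) (1 : ℝ)) ∈
        Metric.closedBall (0 : Plane) r := by
        simp [norm_smul, EuclideanSpace.norm_single, abs_of_pos hr]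
      have hmem : a + r • EuclideanSpace.single (0 : Fin 2) (1 : ℝ) ∈ Kr := by
        rw [hKr]; exact ⟨a, ha, _, hb, rfl⟩
      have hds := h hmem
      simp only [Metric.mem_closedBall] at hds
      have : dist (a + r • EuclideanSpace.single (0 : Fin 2) (1 : ℝ)) y = r := by
        simp [hay, dist_eq_norm, norm_smul, EuclideanSpace.norm_single, abs_of_pos hr]
      rw [this] at hds
      simp only [hay, dist_self]
      linarith
    · have hn : 0 < ‖a - y‖ := by
        simpa [norm_pos_iff, sub_eq_zero] using hay
      set c : ℝ := r / ‖a - y‖ with hc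
      have hcpos : 0 < c := div_pos hr hn
      have hb : (c • (a - y)) ∈ Metric.closedBall (0 : Plane) r := by
        simp only [Metric.mem_closedBall, dist_zero_right, norm_smul, Real.norm_eq_abs,
          abs_of_pos hcpos, hc]
        rw [abs_of_pos (div_pos hr hn), div_mul_cancel₀ _ hn.ne']
      have hmem : a + c • (a - y) ∈ Kr := by
        rw [hKr]; exact ⟨a, ha, _, hb, rfl⟩
      have hds := h hmem
      simp only [Metric.mem_closedBall] at hds
      have heq : dist (a + c • (a - y)) y = dist a y + r := by
        have h1 : a + c • (a - y) - y = (1 + c) • (a - y) := by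
          rw [add_smul, one_smul]; abel
        rw [dist_eq_norm, h1, norm_smul, Real.norm_eq_abs,
          abs_of_pos (by linarith : (0:ℝ) < 1 + c), dist_eq_norm, add_mul, one_mul, hc,
          div_mul_cancel₀ _ hn.ne']
      rw [heq] at hds
      exact hds
  simp only [Metric.mem_closedBall]
  linarith

/-- The smallest circumscribing ball of the Minkowski sum `K + rB²` is concentric with
that of `K`, and its radius is `R + r`. -/
theorem circumcenter_of_minkowski_sum_with_ball
    (K : Set Plane) (hne : K.Nonempty) (hK : IsCompact K)
    (R : ℝ) (x₀ : Plane)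
    (hsub : K ⊆ Metric.closedBall x₀ R)
    (hmin : ∀ (y : Plane) (s : ℝ), K ⊆ Metric.closedBall y s → R ≤ s)
    (r : ℝ) (hr : 0 < r)
    (Kr : Set Plane)
    (hKr : Kr = {p : Plane | ∃ a ∈ K, ∃ b ∈ Metric.closedBall (0 : Plane) r, p = a + b}) :
    Kr ⊆ Metric.closedBall x₀ (R + r) ∧
    (∀ (y : Plane) (s : ℝ), Kr ⊆ Metric.closedBall y s → R + r ≤ s) ∧
    (∀ y : Plane, Kr ⊆ Metric.closedBall y (R + r) → y = x₀) := by
  obtain ⟨a₀, ha₀⟩ := hne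
  have hR0 : 0 ≤ R := le_trans dist_nonneg (hsub ha₀)
  refine ⟨?_, ?_, ?_⟩
  · intro p hp
    rw [hKr] at hp
    obtain ⟨a, ha, b, hb, rfl⟩ := hp
    have h1 : dist a x₀ ≤ R := hsub ha
    have h2 : ‖b‖ ≤ r := by simpa [dist_zero_right] using hb
    calc dist (a + b) x₀ ≤ dist (a + b) a + dist a x₀ := dist_triangle _ _ _
      _ ≤ r + R := by
          have : dist (a + b) a = ‖b‖ := by simp [dist_eq_norm]
          rw [this]; linarith
      _ = R + r := by ring
  · intro y s h
    have := hmin y (s - r) (circum_key K r s hr y Kr hKr h)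
    linarith
  · intro y h
    have hKy : K ⊆ Metric.closedBall y R := by
      have := circum_key K r (R + r) hr y Kr hKr h
      simpa using this
    -- midpoint argument
    set m : Plane := midpoint ℝ y x₀ with hm
    set d : ℝ := dist y x₀ with hd
    have hsq : ∀ x ∈ K, ‖x - m‖ ^ 2 ≤ R ^ 2 - (d / 2) ^ 2 := by
      intro x hx
      have h1 : ‖x - y‖ ≤ R := by
        have := hKy hx; simpa [dist_eq_norm] using this
      have h2 : ‖x - x₀‖ ≤ R := by
        have := hsub hx; simpa [dist_eq_norm] using this
      have hpar : ‖(x - m) + (m - y)‖ ^ 2 + ‖(x - m) - (m - y)‖ ^ 2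
          = 2 * (‖x - m‖ ^ 2 + ‖m - y‖ ^ 2) := by
        have := parallelogram_law_with_norm ℝ (x - m) (m - y)
        rw [sq, sq, sq, sq]; linarith [this]
      have e1 : (x - m) + (m - y) = x - y := by abel
      have e2 : (x - m) - (m - y) = x - x₀ := by
        have h2m : m + m = y + x₀ := midpoint_add_self ℝ y x₀
        have e2' : x - m - (m - y) = x + y - (m + m) := by abel
        rw [e2', h2m]; abel
      rw [e1, e2] at hpar
      have hmy : ‖m - y‖ = d / 2 := by
        rw [← dist_eq_norm, hm, hd, dist_comm, dist_left_midpoint]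
        norm_num
        ring
      rw [hmy] at hpar
      nlinarith [norm_nonneg (x - y), norm_nonneg (x - x₀), sq_nonneg (‖x - y‖ - ‖x - x₀‖)]
    have hnn : 0 ≤ R ^ 2 - (d / 2) ^ 2 := le_trans (sq_nonneg _) (hsq a₀ ha₀)
    have hKm : K ⊆ Metric.closedBall m (Real.sqrt (R ^ 2 - (d / 2) ^ 2)) := by
      intro x hx
      simp only [Metric.mem_closedBall, dist_eq_norm]
      exact (Real.le_sqrt (norm_nonneg _) hnn).mpr (hsq x hx)
    have hRle : R ≤ Real.sqrt (R ^ 2 - (d / 2) ^ 2) := hmin m _ hKm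
    have hR2 : R ^ 2 ≤ R ^ 2 - (d / 2) ^ 2 := (Real.le_sqrt hR0 hnn).mp hRle
    have hd0 : d = 0 := by nlinarith [dist_nonneg.trans_eq hd.symm]
    exact dist_eq_zero.mp (hd ▸ hd0)
end
end

section
/- Let K be a nonempty compact convex subset of ℝ² = EuclideanSpace ℝ (Fin 2), let r > 0, and let D := {a + b : a ∈ K, b ∈ Metric.closedBall 0 r} be the Minkowski sum of K with the closed ball of radius r. Then, with μ the Lebesgue (volume) measure on ℝ², one has 0 < μ(D) < ∞, and the center of mass of D, namely (μ(D))⁻¹ • ∫_{x ∈ D} x ∂μ, lies in K. -/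
open MeasureTheory

open RealInnerProductSpace Pointwise

noncomputable section

lemma key_ineq (K : Set Plane) (hK : IsCompact K)
    {r : ℝ} (hr : 0 < r) {w : Plane} (hw : ‖w‖ = 1) {s : ℝ}
    (hs : ∀ a ∈ K, ⟪w, a⟫ ≤ s) :
    ∫ x in K + Metric.closedBall (0 : Plane) r, (⟪w, x⟫ - s) ∂volume ≤ 0 := by
  set D := K + Metric.closedBall (0 : Plane) r with hDdef
  have hDc : IsCompact D := hK.add (isCompact_closedBall 0 r)
  have hDm : MeasurableSet D := hDc.isClosed.measurableSet
  set g : Plane → ℝ := fun x => ⟪w, x⟫ - s with hgdef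
  have hgc : Continuous g := by
    exact (continuous_const.inner continuous_id).sub continuous_const
  have hww : ⟪w, w⟫ = 1 := by
    rw [real_inner_self_eq_norm_sq, hw]; norm_num
  set R : Plane → Plane := fun x => x + (2 * (s - ⟪w, x⟫)) • w with hRdef
  have hinnerR : ∀ x, ⟪w, R x⟫ = 2 * s - ⟪w, x⟫ := by
    intro x
    simp only [hRdef, inner_add_right, real_inner_smul_right, hww]
    ring
  have hgR : ∀ x, g (R x) = - g x := by
    intro x; simp only [hgdef, hinnerR]; ring
  have hRR : ∀ x, R (R x) = x := by
    intro x
    have h1 := hinnerR x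
    simp only [hRdef] at h1 ⊢
    rw [h1]
    module
  have hRcont : Continuous R := by
    exact continuous_id.add (by fun_prop)
  -- R is measure preserving
  set L := Submodule.reflection ((ℝ ∙ w)ᗮ) with hLdef
  have hLapp : ∀ x, (L x : Plane) = x - (2 * ⟪w, x⟫) • w := by
    intro x
    rw [hLdef, Submodule.reflection_orthogonal_apply, Submodule.reflection_singleton_apply, hw]
    push_cast
    rw [two_smul]
    module
  have hRcomp : R = (fun y => y + (2 * s) • w) ∘ L := by
    funext x
    simp only [Function.comp_apply, hLapp, hRdef]
    module
  have hRmp : MeasurePreserving R volume volume := by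
    rw [hRcomp]
    exact (measurePreserving_add_right volume ((2 * s) • w)).comp L.measurePreserving
  have hRemb : MeasurableEmbedding R :=
    (Homeomorph.mk ⟨R, R, hRR, hRR⟩ hRcont hRcont).measurableEmbedding
  -- geometric claim
  have hRD : ∀ x ∈ D, 0 < g x → R x ∈ D := by
    intro x hx hgx
    obtain ⟨a, ha, b, hb, rfl⟩ := Set.mem_add.1 hx
    rw [Metric.mem_closedBall, dist_zero_right] at hb
    set t : ℝ := g (a + b) with htdef
    have hwx : ⟪w, a + b⟫ = s + t := by simp only [htdef, hgdef]; ring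
    have hβ : t ≤ ⟪w, b⟫ := by
      have := hs a ha
      have : ⟪w, a⟫ + ⟪w, b⟫ = s + t := by rw [← inner_add_right]; exact hwx
      linarith [hs a ha]
    have hRx : R (a + b) = a + (b - (2 * t) • w) := by
      simp only [hRdef, hwx]
      module
    rw [hRx]
    refine Set.add_mem_add ha ?_
    rw [Metric.mem_closedBall, dist_zero_right]
    have hsq : ‖b - (2 * t) • w‖ ^ 2 ≤ ‖b‖ ^ 2 := by
      rw [← real_inner_self_eq_norm_sq, ← real_inner_self_eq_norm_sq]
      simp only [inner_sub_sub_self, real_inner_smul_left, real_inner_smul_right, hww,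
        real_inner_comm b w]
      nlinarith [hgx, hβ, real_inner_comm w b]
    nlinarith [norm_nonneg (b - (2 * t) • w), hb, hr.le, norm_nonneg b]
  -- integrability
  have hIntD : IntegrableOn g D volume := hgc.continuousOn.integrableOn_compact hDc
  set A := D ∩ {x | 0 < g x} with hAdef
  set C := D ∩ {x | g x ≤ 0} with hCdef
  have hAm : MeasurableSet A := hDm.inter (isOpen_lt continuous_const hgc).measurableSet
  have hCm : MeasurableSet C := hDm.inter (isClosed_le hgc continuous_const).measurableSet
  have hIA : IntegrableOn g A volume := hIntD.mono_set Set.inter_subset_left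
  have hIC : IntegrableOn g C volume := hIntD.mono_set Set.inter_subset_left
  have himg : R '' A ⊆ C := by
    rintro _ ⟨x, ⟨hxD, hxg⟩, rfl⟩
    have hx0 : 0 < g x := hxg
    refine ⟨hRD x hxD hxg, ?_⟩
    have : g (R x) = -g x := hgR x
    simp only [Set.mem_setOf_eq, this]
    linarith
  have hstep : ∫ x in A, g x ∂volume ≤ ∫ x in C, (-g x) ∂volume := by
    have h1 : ∫ x in R '' A, (-g x) ∂volume = ∫ x in A, g x ∂volume := by
      rw [hRmp.setIntegral_image_emb hRemb]
      simp only [hgR, neg_neg]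
    rw [← h1]
    refine setIntegral_mono_set (hIC.neg) ?_ (HasSubset.Subset.eventuallyLE himg)
    filter_upwards [ae_restrict_mem hCm] with x hx
    simp only [Pi.zero_apply, Pi.neg_apply, neg_nonneg]
    exact hx.2
  have hsplit : ∫ x in D, g x ∂volume = (∫ x in A, g x ∂volume) + ∫ x in C, g x ∂volume := by
    rw [← setIntegral_union ?_ hCm hIA hIC]
    · congr 1
      rw [hAdef, hCdef, ← Set.inter_union_distrib_left]
      have : {x | 0 < g x} ∪ {x | g x ≤ 0} = Set.univ := by
        ext x
        simp only [Set.mem_union, Set.mem_setOf_eq, Set.mem_univ, iff_true]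
        exact lt_or_ge 0 (g x)
      rw [this, Set.inter_univ]
    · rw [hAdef, hCdef]
      refine Set.disjoint_left.2 fun x hx hx' => ?_
      have h1 : 0 < g x := hx.2
      have h2 : g x ≤ 0 := hx'.2
      linarith
  rw [hsplit]
  rw [integral_neg] at hstep
  linarith

/-- For a nonempty compact convex `K ⊆ ℝ²` and `r > 0`, the Minkowski sum
`D = K + rB²` has finite positive area, and the center of mass of `D` lies in `K`. -/
theorem center_of_mass_of_minkowski_sum_mem
    (K : Set Plane) (hne : K.Nonempty) (hK : IsCompact K) (hconv : Convex ℝ K)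
    (r : ℝ) (hr : 0 < r)
    (D : Set Plane)
    (hD : D = {p : Plane | ∃ a ∈ K, ∃ b ∈ Metric.closedBall (0 : Plane) r, p = a + b}) :
    0 < volume D ∧ volume D < ⊤ ∧
      (volume D).toReal⁻¹ • (∫ x in D, x ∂volume) ∈ K := by
  have hDeq : D = K + Metric.closedBall (0 : Plane) r := by
    rw [hD]; ext p
    simp only [Set.mem_setOf_eq, Set.mem_add]
    constructor
    · rintro ⟨a, ha, b, hb, rfl⟩; exact ⟨a, ha, b, hb, rfl⟩
    · rintro ⟨a, ha, b, hb, rfl⟩; exact ⟨a, ha, b, hb, rfl⟩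
  subst hDeq
  set D := K + Metric.closedBall (0 : Plane) r with hDdef
  have hDc : IsCompact D := hK.add (isCompact_closedBall 0 r)
  have hDm : MeasurableSet D := hDc.isClosed.measurableSet
  obtain ⟨a₀, ha₀⟩ := hne
  have hball : Metric.closedBall a₀ r ⊆ D := by
    intro x hx
    have : x = a₀ + (x - a₀) := by abel
    rw [this]
    refine Set.add_mem_add ha₀ ?_
    rw [Metric.mem_closedBall, dist_zero_right]
    rw [Metric.mem_closedBall, dist_eq_norm] at hx
    exact hx
  have hpos : 0 < volume D :=
    lt_of_lt_of_le (Metric.measure_ball_pos volume a₀ hr)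
      (le_trans (measure_mono Metric.ball_subset_closedBall) (measure_mono hball))
  have hfin : volume D < ⊤ := hDc.measure_lt_top
  refine ⟨hpos, hfin, ?_⟩
  have htpos : 0 < (volume D).toReal := ENNReal.toReal_pos hpos.ne' hfin.ne
  set c : Plane := (volume D).toReal⁻¹ • (∫ x in D, x ∂volume) with hcdef
  by_contra hc
  obtain ⟨f, u, hfa, hfc⟩ := geometric_hahn_banach_closed_point hconv hK.isClosed hc
  set v : Plane := (InnerProductSpace.toDual ℝ Plane).symm f with hvdef
  have hv : ∀ x, ⟪v, x⟫ = f x := fun x => InnerProductSpace.toDual_symm_apply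
  have hvne : v ≠ 0 := by
    intro h
    have h1 := hfa a₀ ha₀
    have h2 : f a₀ = 0 := by rw [← hv, h, inner_zero_left]
    have h3 : f c = 0 := by rw [← hv, h, inner_zero_left]
    linarith
  have hvnorm : 0 < ‖v‖ := norm_pos_iff.2 hvne
  set w : Plane := ‖v‖⁻¹ • v with hwdef
  have hw : ‖w‖ = 1 := norm_smul_inv_norm hvne
  set s : ℝ := ‖v‖⁻¹ * u with hsdef
  have hwinner : ∀ x, ⟪w, x⟫ = ‖v‖⁻¹ * f x := by
    intro x; rw [hwdef, real_inner_smul_left, hv]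
  have hs : ∀ a ∈ K, ⟪w, a⟫ ≤ s := by
    intro a ha
    rw [hwinner, hsdef]
    exact mul_le_mul_of_nonneg_left (hfa a ha).le (inv_nonneg.2 hvnorm.le)
  have hkey := key_ineq K hK hr hw hs
  have hIntId : IntegrableOn (fun x : Plane => x) D volume :=
    continuous_id.continuousOn.integrableOn_compact hDc
  have hIntInner : IntegrableOn (fun x : Plane => ⟪w, x⟫) D volume :=
    (continuous_const.inner continuous_id).continuousOn.integrableOn_compact hDc
  have hsplit : ∫ x in D, (⟪w, x⟫ - s) ∂volume
      = (∫ x in D, ⟪w, x⟫ ∂volume) - s * (volume D).toReal := by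
    rw [integral_sub hIntInner (integrableOn_const hfin.ne)]
    rw [setIntegral_const]
    rw [smul_eq_mul, mul_comm, Measure.real]
  have hInnerInt : ∫ x in D, ⟪w, x⟫ ∂volume = ⟪w, ∫ x in D, x ∂volume⟫ :=
    integral_inner hIntId w
  have hcle : ⟪w, c⟫ ≤ s := by
    rw [hcdef, real_inner_smul_right]
    have h1 : ⟪w, ∫ x in D, x ∂volume⟫ ≤ s * (volume D).toReal := by
      rw [← hInnerInt]; linarith [hkey, hsplit.symm.le, hsplit.le]
    calc (volume D).toReal⁻¹ * ⟪w, ∫ x in D, x ∂volume⟫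
        ≤ (volume D).toReal⁻¹ * (s * (volume D).toReal) :=
          mul_le_mul_of_nonneg_left h1 (inv_nonneg.2 htpos.le)
      _ = s := by field_simp
  have hclt : s < ⟪w, c⟫ := by
    rw [hwinner, hsdef]
    exact mul_lt_mul_of_pos_left hfc (inv_pos.2 hvnorm)
  linarith

end
end

section
/- For a nonempty compact convex set K ⊆ ℂ, define its support function h_K(u) := sSup {(x * (starRingEnd ℂ u)).re : x ∈ K} for u ∈ ℂ, and its Steiner point st(K) := (1/π) • ∫_{θ ∈ [0, 2π]} h_K(Complex.exp(θ * Complex.I)) • Complex.exp(θ * Complex.I) dθ ∈ ℂ. Then for every r > 0, setting D := {a + b : a ∈ K, b ∈ Metric.closedBall 0 r} (the Minkowski sum of K with the closed disk of radius r), one has st(D) = st(K), and st(D) ∈ K. -/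
open MeasureTheory

noncomputable section

/-- The support function of a set `K ⊆ ℂ`: `h_K(u) = sup_{x ∈ K} ⟪x, u⟫`, where the
Euclidean inner product is `(x * conj u).re`. -/
def supportFn (K : Set ℂ) (u : ℂ) : ℝ :=
  sSup ((fun x => (x * (starRingEnd ℂ) u).re) '' K)

/-- The Steiner point of a set `K ⊆ ℂ`:
`st(K) = (1/π) ∫_{0}^{2π} h_K(e^{iθ}) e^{iθ} dθ`. -/
def steinerPoint (K : Set ℂ) : ℂ :=
  (1 / Real.pi) •
    ∫ θ in Set.Icc (0 : ℝ) (2 * Real.pi),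
      supportFn K (Complex.exp (θ * Complex.I)) • Complex.exp (θ * Complex.I)

set_option linter.unusedSectionVars false

def ip (x u : ℂ) : ℝ := (x * (starRingEnd ℂ) u).re
lemma ip_eq (x u : ℂ) : ip x u = x.re * u.re + x.im * u.im := by
  simp [ip, Complex.mul_re]
lemma ip_le_abs (x u : ℂ) : ip x u ≤ ‖x‖ * ‖u‖ := by
  calc ip x u ≤ ‖x * (starRingEnd ℂ) u‖ := Complex.re_le_norm _
  _ = ‖x‖ * ‖u‖ := by rw [norm_mul, Complex.norm_conj]

section SF
variable {S : Set ℂ} {M : ℝ} (hS : S.Nonempty) (hM : ∀ x ∈ S, ‖x‖ ≤ M)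
include hM in
lemma sf_bdd (u : ℂ) : BddAbove ((fun x => (x * (starRingEnd ℂ) u).re) '' S) := by
  refine ⟨M * ‖u‖, ?_⟩
  rintro y ⟨x, hx, rfl⟩
  exact (ip_le_abs x u).trans (by
    have := hM x hx
    have := norm_nonneg u
    nlinarith)
include hM in
lemma ip_le_sf {x : ℂ} (hx : x ∈ S) (u : ℂ) : ip x u ≤ supportFn S u :=
  le_csSup (sf_bdd hM u) ⟨x, hx, rfl⟩
include hS in
lemma sf_le {u : ℂ} {c : ℝ} (h : ∀ x ∈ S, ip x u ≤ c) : supportFn S u ≤ c := by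
  refine csSup_le (hS.image _) ?_
  rintro y ⟨x, hx, rfl⟩; exact h x hx
include hS hM in
lemma sf_sublin {a b : ℝ} (ha : 0 ≤ a) (hb : 0 ≤ b) (u v : ℂ) :
    supportFn S (a • u + b • v) ≤ a * supportFn S u + b * supportFn S v := by
  refine sf_le hS fun x hx => ?_
  have h1 : ip x (a • u + b • v) = a * ip x u + b * ip x v := by
    simp [ip_eq, Complex.add_re, Complex.add_im, Complex.real_smul, Complex.ofReal_mul]
    ring
  rw [h1]
  have := ip_le_sf hM hx u
  have := ip_le_sf hM hx v
  nlinarith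
include hS hM in
lemma sf_smul_le {a : ℝ} (ha : 0 ≤ a) (u : ℂ) : supportFn S (a • u) ≤ a * supportFn S u := by
  have := sf_sublin hS hM ha le_rfl u 0
  simpa using this
include hS hM in
lemma sf_neg_add (u : ℂ) : 0 ≤ supportFn S u + supportFn S (-u) := by
  have h0 : supportFn S 0 ≤ 1 * supportFn S u + 1 * supportFn S (-u) := by
    have := sf_sublin hS hM (zero_le_one) (zero_le_one) u (-u)
    simpa using this
  have h1 : supportFn S (0:ℂ) = 0 := by
    have hle : supportFn S 0 ≤ 0 := sf_le hS fun x hx => by simp [ip]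
    have hge : (0:ℝ) ≤ supportFn S 0 := by
      obtain ⟨x, hx⟩ := hS
      have := ip_le_sf hM hx 0
      simpa [ip] using this
    linarith
  rw [h1] at h0; linarith
include hS hM in
lemma sf_core {u v e : ℂ} {c s : ℝ} (hs : 0 ≤ s) (he : e = c • u + s • v) :
    supportFn S e * c ≤ c^2 * supportFn S u + (s * c) * supportFn S v := by
  rcases le_or_gt 0 c with hc | hc
  · have h := sf_sublin hS hM hc hs u v
    rw [← he] at h
    nlinarith
  · rcases hs.eq_or_lt with hs0 | hs0
    · -- s = 0
      have he' : e = c • u := by rw [he, ← hs0]; simp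
      subst hs0
      have h1 : supportFn S (-e) ≤ (-c) * supportFn S u := by
        have h := sf_smul_le hS hM (a := -c) (by linarith) u
        rw [he', ← neg_smul]; exact h
      have h2 := sf_neg_add hS hM e
      simp only [zero_mul, zero_smul, add_zero] at he ⊢
      nlinarith
    · -- s > 0
      have hv : v = s⁻¹ • e + (-c/s) • u := by
        rw [he]
        match_scalars <;> field_simp <;> ring
      have h := sf_sublin hS hM (inv_nonneg.mpr hs0.le)
        (div_nonneg (neg_nonneg.mpr hc.le) hs0.le) e u
      rw [← hv] at h
      have h2 : s * supportFn S v ≤ supportFn S e - c * supportFn S u := by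
        have := mul_le_mul_of_nonneg_left h (le_of_lt hs0)
        calc s * supportFn S v ≤ s * (s⁻¹ * supportFn S e + -c / s * supportFn S u) := this
          _ = supportFn S e - c * supportFn S u := by field_simp; ring
      nlinarith
end SF

open Real in
lemma aux_int (a b A B : ℝ) :
    ∫ θ in a..b, (Real.cos θ^2 * A + Real.sin θ * Real.cos θ * B)
      = ((Real.cos b * Real.sin b - Real.cos a * Real.sin a + b - a)/2) * A
        + ((Real.sin b^2 - Real.sin a^2)/2) * B := by
  rw [intervalIntegral.integral_add (f := fun θ => Real.cos θ^2 * A)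
      (g := fun θ => Real.sin θ * Real.cos θ * B)
      (((continuous_cos.pow 2).mul continuous_const).intervalIntegrable _ _)
      (((continuous_sin.mul continuous_cos).mul continuous_const).intervalIntegrable _ _),
    intervalIntegral.integral_mul_const, intervalIntegral.integral_mul_const,
    integral_cos_sq, integral_sin_mul_cos₁]

lemma exp_decomp (θ φ : ℝ) : Complex.exp (↑(θ+φ) * Complex.I)
    = Real.cos θ • Complex.exp (φ * Complex.I)
      + Real.sin θ • (Complex.I * Complex.exp (φ * Complex.I)) := by
  rw [Complex.ofReal_add, add_mul, Complex.exp_add, Complex.exp_mul_I,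
    ← Complex.ofReal_cos, ← Complex.ofReal_sin]
  simp [Complex.real_smul]; ring

section SF2
variable {S : Set ℂ} {M : ℝ} (hS : S.Nonempty) (hM : ∀ x ∈ S, ‖x‖ ≤ M)

include hS hM in
lemma sf_sub_le (u v : ℂ) : supportFn S u - supportFn S v ≤ M * ‖u - v‖ := by
  have h1 : supportFn S u ≤ supportFn S v + supportFn S (u - v) := by
    have := sf_sublin hS hM zero_le_one zero_le_one v (u - v)
    simpa using this
  have h2 : supportFn S (u - v) ≤ M * ‖u - v‖ := by
    refine sf_le hS fun x hx => ?_
    have h3 := ip_le_abs x (u - v)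
    have h4 := hM x hx
    have h5 := norm_nonneg (u - v)
    nlinarith
  linarith

include hS hM in
lemma sf_cont : Continuous (supportFn S) := by
  have : LipschitzWith M.toNNReal (supportFn S) := by
    refine LipschitzWith.of_dist_le_mul fun u v => ?_
    rw [Real.dist_eq, Complex.dist_eq]
    have h1 := sf_sub_le hS hM u v
    have h2 := sf_sub_le hS hM v u
    rw [abs_sub_le_iff]
    have hMle : M ≤ (M.toNNReal : ℝ) := Real.le_coe_toNNReal M
    have habs : ‖v - u‖ = ‖u - v‖ := norm_sub_rev v u
    have h0 : (0:ℝ) ≤ ‖u - v‖ := norm_nonneg _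
    have h3 := mul_le_mul_of_nonneg_right hMle h0
    rw [habs] at h2
    constructor <;> linarith
  exact this.continuous

lemma cont_cexp : Continuous (fun θ : ℝ => Complex.exp (↑θ * Complex.I)) :=
  Complex.continuous_exp.comp (Complex.continuous_ofReal.mul continuous_const)

include hS hM in
lemma key_integral (φ : ℝ) :
    ∫ θ in (0:ℝ)..(2*Real.pi),
        supportFn S (Complex.exp (↑(θ+φ) * Complex.I)) * Real.cos θ
      ≤ Real.pi * supportFn S (Complex.exp (↑φ * Complex.I)) := by
  set u0 := Complex.exp (↑φ * Complex.I) with hu0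
  set A := supportFn S u0 with hA
  set f : ℝ → ℝ := fun θ => supportFn S (Complex.exp (↑(θ+φ) * Complex.I)) * Real.cos θ with hf
  have contf : Continuous f :=
    ((sf_cont hS hM).comp (cont_cexp.comp (continuous_id.add continuous_const))).mul
      Real.continuous_cos
  have hpi := Real.pi_pos
  have I1 : ∫ θ in (0:ℝ)..Real.pi, f θ
      ≤ ∫ θ in (0:ℝ)..Real.pi,
          (Real.cos θ^2 * A + Real.sin θ * Real.cos θ * supportFn S (Complex.I * u0)) := by
    refine intervalIntegral.integral_mono_on hpi.le (contf.intervalIntegrable _ _)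
      ((((Real.continuous_cos.pow 2).mul continuous_const).add
        (((Real.continuous_sin.mul Real.continuous_cos)).mul continuous_const)).intervalIntegrable _ _)
      fun θ hθ => ?_
    have hs : 0 ≤ Real.sin θ := Real.sin_nonneg_of_nonneg_of_le_pi hθ.1 hθ.2
    exact sf_core hS hM hs (exp_decomp θ φ)
  have I2 : ∫ θ in Real.pi..(2*Real.pi), f θ
      ≤ ∫ θ in Real.pi..(2*Real.pi),
          (Real.cos θ^2 * A + Real.sin θ * Real.cos θ * (-supportFn S (-(Complex.I * u0)))) := by
    refine intervalIntegral.integral_mono_on (by linarith) (contf.intervalIntegrable _ _)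
      ((((Real.continuous_cos.pow 2).mul continuous_const).add
        (((Real.continuous_sin.mul Real.continuous_cos)).mul continuous_const)).intervalIntegrable _ _)
      fun θ hθ => ?_
    have hs : Real.sin θ ≤ 0 := by
      have h1 : 0 ≤ Real.sin (θ - Real.pi) →  Real.sin θ ≤ 0 := by
        rw [Real.sin_sub_pi]; intro h; linarith
      exact h1 (Real.sin_nonneg_of_nonneg_of_le_pi (by linarith [hθ.1]) (by linarith [hθ.2]))
    have he : Complex.exp (↑(θ+φ) * Complex.I)
        = Real.cos θ • u0 + (-Real.sin θ) • (-(Complex.I * u0)) := by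
      rw [exp_decomp θ φ, neg_smul, smul_neg, neg_neg]
    have := sf_core hS hM (neg_nonneg.mpr hs) he
    calc f θ ≤ Real.cos θ^2 * A + (-Real.sin θ * Real.cos θ) * supportFn S (-(Complex.I * u0)) := this
      _ = Real.cos θ^2 * A + Real.sin θ * Real.cos θ * (-supportFn S (-(Complex.I * u0))) := by ring
  have hsplit : ∫ θ in (0:ℝ)..(2*Real.pi), f θ
      = (∫ θ in (0:ℝ)..Real.pi, f θ) + ∫ θ in Real.pi..(2*Real.pi), f θ :=
    (intervalIntegral.integral_add_adjacent_intervals (contf.intervalIntegrable _ _)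
      (contf.intervalIntegrable _ _)).symm
  rw [hsplit]
  rw [aux_int] at I1 I2
  simp only [Real.sin_pi, Real.cos_pi, Real.sin_two_pi, Real.cos_two_pi, Real.sin_zero,
    Real.cos_zero] at I1 I2
  ring_nf at I1 I2 ⊢
  linarith
end SF2

lemma ip_smul (r : ℝ) (z u : ℂ) : ip (r • z) u = r * ip z u := by
  simp [ip_eq, Complex.smul_re, Complex.smul_im]; ring

lemma ip_smul_right (r : ℝ) (x u : ℂ) : ip x (r • u) = r * ip x u := by
  simp [ip_eq, Complex.smul_re, Complex.smul_im]; ring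

lemma ip_exp_exp (θ φ : ℝ) :
    ip (Complex.exp (θ * Complex.I)) (Complex.exp (φ * Complex.I)) = Real.cos (θ - φ) := by
  unfold ip
  rw [← Complex.exp_conj]
  simp only [map_mul, Complex.conj_I, Complex.conj_ofReal]
  rw [← Complex.exp_add]
  have h : (↑θ * Complex.I + ↑φ * -Complex.I) = ↑(θ - φ) * Complex.I := by push_cast; ring
  rw [h, Complex.exp_ofReal_mul_I_re]

lemma ip_integral (u : ℂ) {f : ℝ → ℂ} {a b : ℝ} (hf : IntervalIntegrable f volume a b) :
    ip (∫ θ in a..b, f θ) u = ∫ θ in a..b, ip (f θ) u := by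
  let L : ℂ →L[ℝ] ℝ :=
    Complex.reCLM.comp ((ContinuousLinearMap.mul ℝ ℂ).flip ((starRingEnd ℂ) u))
  have : ip (∫ θ in a..b, f θ) u = L (∫ θ in a..b, f θ) := rfl
  rw [this, ← L.intervalIntegral_comp_comm hf]
  rfl

section SF3
variable {S : Set ℂ} {M : ℝ} (hS : S.Nonempty) (hM : ∀ x ∈ S, ‖x‖ ≤ M)

include hS hM in
lemma sf_zero : supportFn S (0:ℂ) = 0 := by
  have hle : supportFn S 0 ≤ 0 := sf_le hS fun x hx => by simp [ip]
  have hge : (0:ℝ) ≤ supportFn S 0 := by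
    obtain ⟨x, hx⟩ := hS
    have := ip_le_sf hM hx 0
    simpa [ip] using this
  linarith

lemma steiner_eq (T : Set ℂ) : steinerPoint T = (1 / Real.pi) •
    ∫ θ in (0:ℝ)..(2*Real.pi),
      supportFn T (Complex.exp (θ * Complex.I)) • Complex.exp (θ * Complex.I) := by
  rw [steinerPoint, MeasureTheory.integral_Icc_eq_integral_Ioc,
    ← intervalIntegral.integral_of_le (by positivity : (0:ℝ) ≤ 2*Real.pi)]

include hS hM in
lemma ip_steiner_unit (φ : ℝ) :
    ip (steinerPoint S) (Complex.exp (↑φ * Complex.I))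
      ≤ supportFn S (Complex.exp (↑φ * Complex.I)) := by
  have hpi := Real.pi_pos
  have hint : IntervalIntegrable
      (fun θ : ℝ => supportFn S (Complex.exp (↑θ * Complex.I)) • Complex.exp (↑θ * Complex.I))
      volume 0 (2*Real.pi) :=
    (((sf_cont hS hM).comp cont_cexp).smul cont_cexp).intervalIntegrable _ _
  rw [steiner_eq, ip_smul, ip_integral _ hint]
  have hcongr : ∀ θ : ℝ,
      ip (supportFn S (Complex.exp (↑θ * Complex.I)) • Complex.exp (↑θ * Complex.I))
        (Complex.exp (↑φ * Complex.I))
      = supportFn S (Complex.exp (↑θ * Complex.I)) * Real.cos (θ - φ) := fun θ => by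
    rw [ip_smul, ip_exp_exp]
  rw [intervalIntegral.integral_congr (fun θ _ => hcongr θ)]
  set F : ℝ → ℝ := fun θ => supportFn S (Complex.exp (↑θ * Complex.I)) * Real.cos (θ - φ)
    with hF
  have hper : Function.Periodic F (2*Real.pi) := by
    intro θ
    have h1 : Complex.exp (↑(θ + 2*Real.pi) * Complex.I) = Complex.exp (↑θ * Complex.I) := by
      rw [Complex.ofReal_add, add_mul, Complex.exp_add]
      push_cast
      rw [Complex.exp_two_pi_mul_I, mul_one]
    have h2 : Real.cos (θ + 2*Real.pi - φ) = Real.cos (θ - φ) := by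
      rw [show θ + 2*Real.pi - φ = (θ - φ) + 2*Real.pi by ring, Real.cos_add_two_pi]
    simp only [hF, h1, h2]
  have hshift : ∫ θ in (0:ℝ)..(2*Real.pi), F θ
      = ∫ θ in (0:ℝ)..(2*Real.pi), F (θ + φ) := by
    have h := hper.intervalIntegral_add_eq 0 φ
    rw [intervalIntegral.integral_comp_add_right F φ, zero_add, add_comm (2*Real.pi) φ, ← h,
      zero_add]
  rw [hshift]
  have hFeq : ∀ θ : ℝ, F (θ + φ)
      = supportFn S (Complex.exp (↑(θ + φ) * Complex.I)) * Real.cos θ := fun θ => by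
    simp only [hF, add_sub_cancel_right]
  rw [intervalIntegral.integral_congr (fun θ _ => hFeq θ)]
  have hkey := key_integral hS hM φ
  calc (1/Real.pi) * ∫ θ in (0:ℝ)..(2*Real.pi),
        supportFn S (Complex.exp (↑(θ + φ) * Complex.I)) * Real.cos θ
      ≤ (1/Real.pi) * (Real.pi * supportFn S (Complex.exp (↑φ * Complex.I))) := by
        apply mul_le_mul_of_nonneg_left hkey (by positivity)
    _ = supportFn S (Complex.exp (↑φ * Complex.I)) := by field_simp

include hS hM in
lemma ip_steiner_le (u : ℂ) : ip (steinerPoint S) u ≤ supportFn S u := by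
  rcases eq_or_ne u 0 with rfl | hu
  · rw [sf_zero hS hM]; simp [ip]
  · set n := ‖u‖ with hn
    have hn0 : 0 < n := norm_pos_iff.mpr hu
    set v := (n⁻¹ : ℝ) • u with hv
    have hv1 : ‖v‖ = 1 := by
      rw [hv, norm_smul, Real.norm_eq_abs,
        abs_of_pos (inv_pos.mpr hn0), ← hn, inv_mul_cancel₀ hn0.ne']
    obtain ⟨φ, hφ⟩ := (Complex.norm_eq_one_iff v).mp hv1
    have huv : u = n • v := by
      rw [hv, smul_smul, mul_inv_cancel₀ hn0.ne', one_smul]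
    have h1 : ip (steinerPoint S) v ≤ supportFn S v := by
      rw [← hφ]; exact ip_steiner_unit hS hM φ
    have h2 : supportFn S v ≤ n⁻¹ * supportFn S u := by
      have := sf_smul_le hS hM (inv_nonneg.mpr hn0.le) u
      rwa [← hv] at this
    calc ip (steinerPoint S) u = n * ip (steinerPoint S) v := by
          conv_lhs => rw [huv]
          rw [ip_smul_right]
      _ ≤ n * supportFn S v := by
          exact mul_le_mul_of_nonneg_left h1 hn0.le
      _ ≤ n * (n⁻¹ * supportFn S u) := mul_le_mul_of_nonneg_left h2 hn0.le
      _ = supportFn S u := by field_simp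
end SF3

lemma ip_add_left (x y u : ℂ) : ip (x + y) u = ip x u + ip y u := by
  simp [ip_eq]; ring

lemma ip_self (u : ℂ) : ip u u = ‖u‖ ^ 2 := by
  rw [ip_eq, Complex.sq_norm, Complex.normSq_apply]

lemma exp_circle_integral :
    ∫ θ in (0:ℝ)..(2*Real.pi), Complex.exp (↑θ * Complex.I) = 0 := by
  have h := integral_exp_mul_complex (a := (0:ℝ)) (b := 2*Real.pi) (c := Complex.I)
    Complex.I_ne_zero
  simp_rw [mul_comm Complex.I] at h
  rw [h]
  push_cast
  rw [mul_comm ((2:ℂ)*Real.pi) Complex.I, mul_comm Complex.I]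
  rw [Complex.exp_two_pi_mul_I]
  simp

section Main
variable {K : Set ℂ} (hne : K.Nonempty) (hK : IsCompact K) (hconv : Convex ℝ K)

include hne hK hconv in
lemma steiner_mem : steinerPoint K ∈ K := by
  obtain ⟨M, hM⟩ : ∃ M, ∀ x ∈ K, ‖x‖ ≤ M := by
    obtain ⟨R, hR⟩ := hK.isBounded.exists_norm_le
    exact ⟨R, fun x hx => by exact hR x hx⟩
  by_contra hmem
  obtain ⟨f, c, hc1, hc2⟩ := geometric_hahn_banach_closed_point hconv hK.isClosed hmem
  set w : ℂ := ⟨f 1, f Complex.I⟩ with hw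
  have hfw : ∀ x : ℂ, f x = ip x w := by
    intro x
    have hx : x = x.re • (1:ℂ) + x.im • Complex.I := by
      simp [Complex.real_smul]
    have : f x = x.re * f 1 + x.im * f Complex.I := by
      conv_lhs => rw [hx]
      rw [map_add, f.map_smul, f.map_smul, smul_eq_mul, smul_eq_mul]
    rw [this, ip_eq]
  have hsf : supportFn K w ≤ c := sf_le hne fun a ha => by
    rw [← hfw a]; exact (hc1 a ha).le
  have hip := ip_steiner_le hne hM w
  rw [← hfw] at hip
  linarith

variable {r : ℝ} (hr : 0 < r) {D : Set ℂ}
  (hD : D = {p : ℂ | ∃ a ∈ K, ∃ b ∈ Metric.closedBall (0 : ℂ) r, p = a + b})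

include hne hr hD in
lemma D_ne : D.Nonempty := by
  obtain ⟨a, ha⟩ := hne
  exact ⟨a + 0, by rw [hD]; exact ⟨a, ha, 0, by simp [hr.le], rfl⟩⟩

include hr hD in
lemma D_bound {M : ℝ} (hM : ∀ x ∈ K, ‖x‖ ≤ M) :
    ∀ x ∈ D, ‖x‖ ≤ M + r := by
  intro x hx
  rw [hD] at hx
  obtain ⟨a, ha, b, hb, rfl⟩ := hx
  have h1 : ‖b‖ ≤ r := by
    rwa [Metric.mem_closedBall, Complex.dist_eq, sub_zero] at hb
  calc ‖a + b‖ ≤ ‖a‖ + ‖b‖ := norm_add_le a b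
    _ ≤ M + r := add_le_add (hM a ha) h1

include hne hr hD in
lemma sf_D {M : ℝ} (hM : ∀ x ∈ K, ‖x‖ ≤ M) (u : ℂ) :
    supportFn D u = supportFn K u + r * ‖u‖ := by
  have hDne := D_ne hne hr hD
  have hMD := D_bound hr hD hM
  apply le_antisymm
  · refine sf_le hDne fun p hp => ?_
    rw [hD] at hp
    obtain ⟨a, ha, b, hb, rfl⟩ := hp
    rw [ip_add_left]
    have h1 : ip a u ≤ supportFn K u := ip_le_sf hM ha u
    have h2 : ip b u ≤ r * ‖u‖ := by
      have hb1 : ‖b‖ ≤ r := by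
        rwa [Metric.mem_closedBall, Complex.dist_eq, sub_zero] at hb
      have := ip_le_abs b u
      nlinarith [norm_nonneg u]
    linarith
  · rcases eq_or_ne u 0 with rfl | hu
    · rw [sf_zero hne hM, sf_zero hDne hMD]; simp
    · have hn0 : 0 < ‖u‖ := norm_pos_iff.mpr hu
      have hstep : ∀ a ∈ K, ip a u ≤ supportFn D u - r * ‖u‖ := by
        intro a ha
        set b : ℂ := (r / ‖u‖) • u with hb
        have hbmem : b ∈ Metric.closedBall (0:ℂ) r := by
          rw [Metric.mem_closedBall, Complex.dist_eq, sub_zero, hb, norm_smul,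
            Real.norm_eq_abs, abs_of_pos (by positivity)]
          rw [div_mul_cancel₀ _ hn0.ne']
        have hmem : a + b ∈ D := by rw [hD]; exact ⟨a, ha, b, hbmem, rfl⟩
        have h3 : ip (a + b) u ≤ supportFn D u := ip_le_sf hMD hmem u
        have h4 : ip b u = r * ‖u‖ := by
          rw [hb, ip_smul, ip_self]
          field_simp
        rw [ip_add_left, h4] at h3
        linarith
      have := sf_le hne hstep
      linarith

include hne hr hD in
lemma st_D_eq {M : ℝ} (hM : ∀ x ∈ K, ‖x‖ ≤ M) :
    steinerPoint D = steinerPoint K := by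
  have hDne := D_ne hne hr hD
  have hMD := D_bound hr hD hM
  rw [steiner_eq, steiner_eq]
  have heq : ∀ θ : ℝ, supportFn D (Complex.exp (↑θ * Complex.I)) • Complex.exp (↑θ * Complex.I)
      = supportFn K (Complex.exp (↑θ * Complex.I)) • Complex.exp (↑θ * Complex.I)
        + r • Complex.exp (↑θ * Complex.I) := by
    intro θ
    rw [sf_D hne hr hD hM, Complex.norm_exp_ofReal_mul_I, mul_one, add_smul]
  rw [intervalIntegral.integral_congr (fun θ _ => heq θ)]
  have hint1 : IntervalIntegrable
      (fun θ : ℝ => supportFn K (Complex.exp (↑θ * Complex.I)) • Complex.exp (↑θ * Complex.I))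
      volume 0 (2*Real.pi) :=
    (((sf_cont hne hM).comp cont_cexp).smul cont_cexp).intervalIntegrable _ _
  have hint2 : IntervalIntegrable (fun θ : ℝ => r • Complex.exp (↑θ * Complex.I))
      volume 0 (2*Real.pi) := ((Continuous.smul (continuous_const : Continuous fun _ : ℝ => r) cont_cexp).intervalIntegrable _ _)
  rw [intervalIntegral.integral_add hint1 hint2]
  rw [intervalIntegral.integral_smul, exp_circle_integral, smul_zero, add_zero]
end Main

/-- The Steiner point of the Minkowski sum `D = K + rB²` of a nonempty compact convex
set `K ⊆ ℂ` with a closed disk equals the Steiner point of `K`, and lies in `K`. -/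
theorem steinerPoint_minkowski_sum
    (K : Set ℂ) (hne : K.Nonempty) (hK : IsCompact K) (hconv : Convex ℝ K)
    (r : ℝ) (hr : 0 < r)
    (D : Set ℂ)
    (hD : D = {p : ℂ | ∃ a ∈ K, ∃ b ∈ Metric.closedBall (0 : ℂ) r, p = a + b}) :
    steinerPoint D = steinerPoint K ∧ steinerPoint D ∈ K := by
  obtain ⟨M, hM⟩ : ∃ M, ∀ x ∈ K, ‖x‖ ≤ M := by
    obtain ⟨R, hR⟩ := hK.isBounded.exists_norm_le
    exact ⟨R, fun x hx => by exact hR x hx⟩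
  have h1 := st_D_eq hne hr hD hM
  exact ⟨h1, h1 ▸ steiner_mem hne hK hconv⟩
end
end

section
/- Let γ : ℝ → ℝ² (with ℝ² = EuclideanSpace ℝ (Fin 2)) be a twice continuously differentiable map (ContDiff ℝ 2), periodic with period L > 0 (γ(t + L) = γ(t) for all t), injective on the interval [0, L), and with nonvanishing derivative (deriv γ t ≠ 0 for all t). Let Γ := Set.range γ. Then there exists ε > 0 such that every point p ∈ ℝ² with Metric.infDist p Γ < ε has a unique nearest point on Γ: there exists exactly one q ∈ Γ with dist(p, q) = Metric.infDist p Γ. (That is, a C² embedded closed curve in the plane has positive reach.) -/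
noncomputable section

open Metric Set Filter Topology Module

def Jlin : Plane →ₗ[ℝ] Plane where
  toFun v := !₂[-(v 1), v 0]
  map_add' v w := by ext i; fin_cases i <;> simp [Matrix.cons_val_zero, Matrix.cons_val_one] <;> ring
  map_smul' c v := by ext i; fin_cases i <;> simp <;> ring

def J : Plane →L[ℝ] Plane := LinearMap.toContinuousLinearMap Jlin

@[simp] lemma J_apply_0 (v : Plane) : J v 0 = -(v 1) := rfl
@[simp] lemma J_apply_1 (v : Plane) : J v 1 = v 0 := rfl

lemma plane_ne_zero_iff (v : Plane) : v ≠ 0 ↔ v 0 ≠ 0 ∨ v 1 ≠ 0 := by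
  constructor
  · intro h
    by_contra hc
    push_neg at hc
    exact h (by ext i; fin_cases i <;> simp [hc.1, hc.2])
  · rintro (h | h) hv <;> simp [hv] at h
lemma inner_plane (v w : Plane) : (inner ℝ v w : ℝ) = v 0 * w 0 + v 1 * w 1 := by
  simp [PiLp.inner_apply, Fin.sum_univ_two]; ring

lemma exists_smul_J (v w : Plane) (hv : v ≠ 0) (h : (inner ℝ v w : ℝ) = 0) :
    ∃ u : ℝ, w = u • J v := by
  rw [inner_plane] at h
  rw [plane_ne_zero_iff] at hv
  rcases eq_or_ne (v 0) 0 with h0 | h0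
  · have h1 : v 1 ≠ 0 := by tauto
    refine ⟨-(w 0) / v 1, ?_⟩
    have hw1 : w 1 = 0 := by
      have h' : v 1 * w 1 = 0 := by rw [h0] at h; linarith
      exact (mul_eq_zero.mp h').resolve_left h1
    ext i; fin_cases i <;> simp [hw1, h0] <;> field_simp
  · refine ⟨w 1 / v 0, ?_⟩
    ext i; fin_cases i
    · have : w 0 = -(v 1 * w 1) / v 0 := by field_simp; linarith
      simp [this]; ring
    · simp; field_simp

lemma indep_J (v : Plane) (hv : v ≠ 0) (h k : ℝ) (he : h • v + k • J v = 0) : h = 0 ∧ k = 0 := by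
  have h0 : h * v 0 + k * -(v 1) = 0 := by
    have := congrArg (fun x : Plane => x 0) he
    simpa [PiLp.add_apply, PiLp.smul_apply] using this
  have h1 : h * v 1 + k * v 0 = 0 := by
    have := congrArg (fun x : Plane => x 1) he
    simpa [PiLp.add_apply, PiLp.smul_apply] using this
  have hv2 : 0 < v 0 ^ 2 + v 1 ^ 2 := by
    rcases (plane_ne_zero_iff v).mp hv with h' | h' <;> positivity
  have hh : h * (v 0 ^ 2 + v 1 ^ 2) = 0 := by linear_combination h0 * v 0 + h1 * v 1
  have hk : k * (v 0 ^ 2 + v 1 ^ 2) = 0 := by linear_combination h1 * v 0 - h0 * v 1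
  exact ⟨by rcases mul_eq_zero.mp hh with h'|h'; exact h'; linarith,
         by rcases mul_eq_zero.mp hk with h'|h'; exact h'; linarith⟩

lemma local_inj (γ : ℝ → Plane) (hγ : ContDiff ℝ 2 γ) (hreg : ∀ t, deriv γ t ≠ 0) (t₀ : ℝ) :
    ∃ U ∈ 𝓝 ((t₀, (0:ℝ)) : ℝ × ℝ),
      Set.InjOn (fun q : ℝ × ℝ => γ q.1 + q.2 • J (deriv γ q.1)) U := by
  set v := deriv γ t₀ with hv
  set F : ℝ × ℝ → Plane := fun q => γ q.1 + q.2 • J (deriv γ q.1) with hF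
  -- the candidate derivative
  set A : (ℝ × ℝ) →L[ℝ] Plane :=
    (ContinuousLinearMap.fst ℝ ℝ ℝ).smulRight v + (ContinuousLinearMap.snd ℝ ℝ ℝ).smulRight (J v) with hA
  have hAinj : Function.Injective A := by
    intro m m' hmm
    have hz : A (m - m') = 0 := by rw [map_sub, hmm, sub_self]
    have := indep_J v (hreg t₀) (m - m').1 (m - m').2
      (by simpa [hA, ContinuousLinearMap.smulRight_apply] using hz)
    have h1 := sub_eq_zero.mp (Prod.ext_iff.mp (show m - m' = 0 from Prod.ext this.1 this.2)).1
    have h2 := (Prod.ext_iff.mp (show m - m' = 0 from Prod.ext this.1 this.2))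
    exact sub_eq_zero.mp (by ext <;> [exact h2.1; exact h2.2] : m - m' = 0)
  have hfr : Module.finrank ℝ (ℝ × ℝ) = Module.finrank ℝ Plane := by simp
  set e : (ℝ × ℝ) ≃L[ℝ] Plane :=
    (LinearMap.linearEquivOfInjective A.toLinearMap hAinj hfr).toContinuousLinearEquiv with he
  have hce : (e : (ℝ × ℝ) →L[ℝ] Plane) = A := by
    ext x <;> rfl
  -- derivative of γ part
  have hd2 : ContDiff ℝ 1 (deriv γ) := by
    have := (contDiff_succ_iff_deriv (n := 1)).mp (by norm_num at hγ ⊢; exact hγ)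
    exact this.2.2
  have hγ1 : HasStrictDerivAt γ v t₀ := hγ.contDiffAt.hasStrictDerivAt (by norm_num)
  have hfst : HasStrictFDerivAt (fun q : ℝ × ℝ => q.1) (ContinuousLinearMap.fst ℝ ℝ ℝ) (t₀, 0) :=
    (ContinuousLinearMap.fst ℝ ℝ ℝ).hasStrictFDerivAt
  have h1 : HasStrictFDerivAt (fun q : ℝ × ℝ => γ q.1)
      ((1 : ℝ →L[ℝ] ℝ).smulRight v |>.comp (ContinuousLinearMap.fst ℝ ℝ ℝ)) (t₀, 0) :=
    hγ1.hasStrictFDerivAt.comp (t₀, 0) hfst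
  -- derivative of normal part
  have hg : ContDiff ℝ 1 (fun t => J (deriv γ t)) := J.contDiff.comp hd2
  have hg' : HasStrictFDerivAt (fun q : ℝ × ℝ => J (deriv γ q.1))
      ((fderiv ℝ (fun q : ℝ × ℝ => J (deriv γ q.1)) (t₀, 0))) (t₀, 0) :=
    ((hg.comp contDiff_fst).contDiffAt).hasStrictFDerivAt (by norm_num)
  have hsnd : HasStrictFDerivAt (fun q : ℝ × ℝ => q.2) (ContinuousLinearMap.snd ℝ ℝ ℝ) (t₀, 0) :=
    (ContinuousLinearMap.snd ℝ ℝ ℝ).hasStrictFDerivAt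
  have h2 : HasStrictFDerivAt (fun q : ℝ × ℝ => q.2 • J (deriv γ q.1))
      (((t₀, (0:ℝ)).2 • (fderiv ℝ (fun q : ℝ × ℝ => J (deriv γ q.1)) (t₀, 0))) +
        (ContinuousLinearMap.snd ℝ ℝ ℝ).smulRight (J (deriv γ (t₀, (0:ℝ)).1))) (t₀, 0) :=
    hsnd.smul hg'
  have hFd : HasStrictFDerivAt F ((e : (ℝ × ℝ) ≃L[ℝ] Plane) : (ℝ × ℝ) →L[ℝ] Plane) (t₀, 0) := by
    rw [hce]
    have := h1.add h2
    refine this.congr_fderiv ?_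
    ext x <;> simp [hA, hv]
  set ph := hFd.toOpenPartialHomeomorph F with hph
  refine ⟨ph.source, ?_, ?_⟩
  · exact ph.open_source.mem_nhds hFd.mem_toOpenPartialHomeomorph_source
  · have : Set.InjOn ph ph.source := ph.injOn
    rwa [hFd.toOpenPartialHomeomorph_coe] at this

lemma nearest_orth (γ : ℝ → Plane) (hγ : ContDiff ℝ 2 γ) (p : Plane) (t : ℝ)
    (hmin : ∀ s : ℝ, dist p (γ t) ≤ dist p (γ s)) :
    (inner ℝ (deriv γ t) (p - γ t) : ℝ) = 0 := by
  set f : ℝ → ℝ := fun s => inner ℝ (γ s - p) (γ s - p) with hf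
  have hdγ : ∀ s, HasDerivAt (fun x => γ x - p) (deriv γ s) s := fun s =>
    ((hγ.differentiable (by norm_num) s).hasDerivAt).sub_const p
  have hfd : HasDerivAt f (inner ℝ (γ t - p) (deriv γ t) + inner ℝ (deriv γ t) (γ t - p)) t :=
    (hdγ t).inner ℝ (hdγ t)
  have hlm : IsLocalMin f t := by
    apply Filter.Eventually.of_forall
    intro s
    have h1 : dist p (γ t) ≤ dist p (γ s) := hmin s
    have e1 : ∀ x : ℝ, f x = ‖γ x - p‖ ^ 2 := fun x => real_inner_self_eq_norm_sq _
    rw [e1, e1]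
    have : ‖γ t - p‖ ≤ ‖γ s - p‖ := by
      rw [dist_eq_norm] at h1
      calc ‖γ t - p‖ = ‖p - γ t‖ := (norm_sub_rev _ _)
        _ ≤ ‖p - γ s‖ := h1
        _ = ‖γ s - p‖ := norm_sub_rev _ _
    exact pow_le_pow_left₀ (norm_nonneg _) this 2
  have hz : inner ℝ (γ t - p) (deriv γ t) + (inner ℝ (deriv γ t) (γ t - p) : ℝ) = 0 := by
    rw [← hfd.deriv]
    exact hlm.deriv_eq_zero
  have hsym : (inner ℝ (γ t - p) (deriv γ t) : ℝ) = inner ℝ (deriv γ t) (γ t - p) := real_inner_comm _ _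
  have h2 : (inner ℝ (deriv γ t) (γ t - p) : ℝ) = 0 := by linarith [hz, hsym.symm ▸ hz]
  have : (inner ℝ (deriv γ t) (p - γ t) : ℝ) = - inner ℝ (deriv γ t) (γ t - p) := by
    rw [← inner_neg_right]; congr 1; abel
  rw [this, h2, neg_zero]

lemma coeff_tendsto_zero {x : ℕ → Plane} {u : ℕ → ℝ} {w : ℕ → Plane} {w₀ : Plane}
    (hw : Filter.Tendsto w Filter.atTop (𝓝 w₀)) (hw0 : w₀ ≠ 0)
    (hx : Filter.Tendsto (fun n => ‖x n‖) Filter.atTop (𝓝 0))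
    (hrep : ∀ n, x n = u n • w n) :
    Filter.Tendsto u Filter.atTop (𝓝 0) := by
  have hwn : Filter.Tendsto (fun n => ‖w n‖) Filter.atTop (𝓝 ‖w₀‖) := hw.norm
  have hpos : 0 < ‖w₀‖ := norm_pos_iff.mpr hw0
  have hev : ∀ᶠ n in Filter.atTop, ‖w₀‖ / 2 < ‖w n‖ :=
    hwn.eventually (eventually_gt_nhds (by linarith))
  have habs : Filter.Tendsto (fun n => |u n|) Filter.atTop (𝓝 0) := by
    apply squeeze_zero' (Filter.Eventually.of_forall fun n => abs_nonneg _)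
      (g := fun n => (2 / ‖w₀‖) * ‖x n‖) ?_ ?_
    · filter_upwards [hev] with n hn
      have h1 : ‖x n‖ = |u n| * ‖w n‖ := by rw [hrep n, norm_smul, Real.norm_eq_abs]
      rw [h1]
      rw [div_mul_eq_mul_div, le_div_iff₀ hpos]
      nlinarith [abs_nonneg (u n)]
    · simpa using hx.const_mul (2 / ‖w₀‖)
  rw [tendsto_zero_iff_norm_tendsto_zero]
  simpa [Real.norm_eq_abs] using habs

/-- A `C²` embedded closed curve in the plane has positive reach: every point
sufficiently close to the curve has a unique nearest point on it. -/
theorem c2_closed_curve_positive_reach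
    (γ : ℝ → Plane) (hγ : ContDiff ℝ 2 γ)
    (L : ℝ) (hL : 0 < L) (hper : ∀ t, γ (t + L) = γ t)
    (hinj : Set.InjOn γ (Set.Ico 0 L))
    (hreg : ∀ t, deriv γ t ≠ 0) :
    ∃ ε > (0:ℝ), ∀ p : Plane, Metric.infDist p (Set.range γ) < ε →
      ∃! q : Plane, q ∈ Set.range γ ∧ dist p q = Metric.infDist p (Set.range γ) := by
  classical
  have hcont : Continuous γ := hγ.continuous
  have hperP : Function.Periodic γ L := hper
  have hrange : Set.range γ = γ '' Set.Icc 0 L := by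
    apply subset_antisymm
    · rintro _ ⟨t, rfl⟩
      exact ⟨t - ⌊t / L⌋ * L, ⟨Int.sub_floor_div_mul_nonneg t hL,
        le_of_lt (Int.sub_floor_div_mul_lt t hL)⟩, hperP.sub_int_mul_eq ⌊t / L⌋⟩
    · rintro _ ⟨t, _, rfl⟩; exact mem_range_self t
  have hΓc : IsCompact (Set.range γ) := hrange ▸ isCompact_Icc.image hcont
  have hne : (Set.range γ).Nonempty := ⟨γ 0, mem_range_self 0⟩
  have hd2 : ContDiff ℝ 1 (deriv γ) := by
    have := (contDiff_succ_iff_deriv (n := 1)).mp (by norm_num at hγ ⊢; exact hγ)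
    exact this.2.2
  by_contra hcon
  push_neg at hcon
  have key : ∀ n : ℕ, ∃ (pt : Plane) (a b : ℝ), a ∈ Set.Ico 0 L ∧ b ∈ Set.Ico 0 L ∧
      γ a ≠ γ b ∧ dist pt (γ a) = Metric.infDist pt (Set.range γ) ∧
      dist pt (γ b) = Metric.infDist pt (Set.range γ) ∧
      Metric.infDist pt (Set.range γ) < 1 / (n + 1) := by
    intro n
    obtain ⟨pt, hlt, hnu⟩ := hcon (1 / (n + 1)) (by positivity)
    obtain ⟨q, hqΓ, hq⟩ := hΓc.exists_infDist_eq_dist hne pt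
    have hsec : ∃ q', (q' ∈ Set.range γ ∧ dist pt q' = Metric.infDist pt (Set.range γ)) ∧ q' ≠ q := by
      by_contra h
      push_neg at h
      exact hnu ⟨q, ⟨hqΓ, hq.symm⟩, fun y hy => h y hy⟩
    obtain ⟨q', ⟨hq'Γ, hq'd⟩, hne'⟩ := hsec
    obtain ⟨a0, rfl⟩ := hqΓ
    obtain ⟨b0, rfl⟩ := hq'Γ
    have hra := hperP.sub_int_mul_eq (x := a0) ⌊a0 / L⌋
    have hrb := hperP.sub_int_mul_eq (x := b0) ⌊b0 / L⌋
    refine ⟨pt, a0 - ⌊a0 / L⌋ * L, b0 - ⌊b0 / L⌋ * L,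
      ⟨Int.sub_floor_div_mul_nonneg a0 hL, Int.sub_floor_div_mul_lt a0 hL⟩,
      ⟨Int.sub_floor_div_mul_nonneg b0 hL, Int.sub_floor_div_mul_lt b0 hL⟩,
      ?_, ?_, ?_, hlt⟩
    · rw [hra, hrb]; exact fun h => hne' h.symm
    · rw [hra, ← hq]
    · rw [hrb]; exact hq'd
  choose p a b ha hb hab hda hdb hlt using key
  obtain ⟨t0, ht0, φ, hφ, hta⟩ := isCompact_Icc.tendsto_subseq
    (x := a) (fun n => Set.Ico_subset_Icc_self (ha n))
  obtain ⟨s0, hs0, ψ, hψ, htb⟩ := isCompact_Icc.tendsto_subseq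
    (x := b ∘ φ) (fun n => Set.Ico_subset_Icc_self (hb (φ n)))
  set σ : ℕ → ℕ := φ ∘ ψ with hσ
  have hσmono : StrictMono σ := hφ.comp hψ
  have hAlim : Tendsto (fun n => a (σ n)) atTop (𝓝 t0) := hta.comp hψ.tendsto_atTop
  have hBlim0 : Tendsto (fun n => b (σ n)) atTop (𝓝 s0) := htb
  have hdlim : Tendsto (fun n => Metric.infDist (p (σ n)) (Set.range γ)) atTop (𝓝 0) := by
    apply squeeze_zero (fun n => Metric.infDist_nonneg) (g := fun n : ℕ => 1 / (n + 1))
    · intro n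
      refine le_trans (le_of_lt (hlt (σ n))) ?_
      apply one_div_le_one_div_of_le (by positivity)
      have : (n : ℝ) ≤ (σ n : ℝ) := by exact_mod_cast hσmono.le_apply
      linarith
    · exact tendsto_one_div_add_atTop_nhds_zero_nat
  have hxnormA : Tendsto (fun n => ‖p (σ n) - γ (a (σ n))‖) atTop (𝓝 0) := by
    have : ∀ n, ‖p (σ n) - γ (a (σ n))‖ = Metric.infDist (p (σ n)) (Set.range γ) := fun n => by
      rw [← hda (σ n), dist_eq_norm]
    simpa only [this] using hdlim
  have hγAlim : Tendsto (fun n => γ (a (σ n))) atTop (𝓝 (γ t0)) := (hcont.tendsto t0).comp hAlim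
  have hplim : Tendsto (fun n => p (σ n)) atTop (𝓝 (γ t0)) := by
    have h2 : Tendsto (fun n => p (σ n) - γ (a (σ n))) atTop (𝓝 0) :=
      tendsto_zero_iff_norm_tendsto_zero.mpr hxnormA
    simpa using h2.add hγAlim
  have hγBlim : Tendsto (fun n => γ (b (σ n))) atTop (𝓝 (γ s0)) := (hcont.tendsto s0).comp hBlim0
  have hγBlim' : Tendsto (fun n => γ (b (σ n))) atTop (𝓝 (γ t0)) := by
    have h2 : Tendsto (fun n => γ (b (σ n)) - p (σ n)) atTop (𝓝 0) := by
      rw [tendsto_zero_iff_norm_tendsto_zero]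
      have : ∀ n, ‖γ (b (σ n)) - p (σ n)‖ = Metric.infDist (p (σ n)) (Set.range γ) := fun n => by
        rw [← hdb (σ n), dist_eq_norm, norm_sub_rev]
      simpa only [this] using hdlim
    simpa using h2.add hplim
  have hts : γ t0 = γ s0 := tendsto_nhds_unique hγBlim' hγBlim
  have hδ : ∃ δ : ℝ, s0 + δ = t0 ∧ ∀ x, γ (x + δ) = γ x := by
    rcases eq_or_ne t0 s0 with h | h
    · exact ⟨0, by rw [add_zero, h], fun x => by rw [add_zero]⟩
    · have hL0 : γ L = γ 0 := by simpa using hper 0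
      have hcase : (t0 = L ∧ s0 = 0) ∨ (t0 = 0 ∧ s0 = L) := by
        rcases lt_or_eq_of_le ht0.2 with h1 | h1
        · rcases lt_or_eq_of_le hs0.2 with h2 | h2
          · exact absurd (hinj ⟨ht0.1, h1⟩ ⟨hs0.1, h2⟩ hts) h
          · right
            have he : γ t0 = γ 0 := by rw [hts, h2, hL0]
            exact ⟨hinj ⟨ht0.1, h1⟩ ⟨le_refl 0, hL⟩ he, h2⟩
        · left
          rcases lt_or_eq_of_le hs0.2 with h2 | h2
          · have he : γ s0 = γ 0 := by rw [← hts, h1, hL0]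
            exact ⟨h1, hinj ⟨hs0.1, h2⟩ ⟨le_refl 0, hL⟩ he⟩
          · exact absurd (h1.trans h2.symm) h
      rcases hcase with ⟨h1, h2⟩ | ⟨h1, h2⟩
      · exact ⟨L, by rw [h2, zero_add, h1], hper⟩
      · refine ⟨-L, by rw [h2, h1]; ring, fun x => ?_⟩
        have hx := hper (x - L)
        rw [sub_add_cancel] at hx
        rw [← sub_eq_add_neg]
        exact hx.symm
  obtain ⟨δ, hδ1, hδ2⟩ := hδ
  set B : ℕ → ℝ := fun n => b (σ n) + δ with hB
  have hγB : ∀ n, γ (B n) = γ (b (σ n)) := fun n => hδ2 _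
  have hBlim : Tendsto B atTop (𝓝 t0) := by
    have := hBlim0.add_const δ
    rwa [hδ1] at this
  have hmin : ∀ (pt : Plane) (t : ℝ), dist pt (γ t) = Metric.infDist pt (Set.range γ) →
      ∀ s, dist pt (γ t) ≤ dist pt (γ s) :=
    fun pt t h s => h ▸ Metric.infDist_le_dist_of_mem (mem_range_self s)
  have hun : ∀ n, ∃ u : ℝ, p (σ n) - γ (a (σ n)) = u • J (deriv γ (a (σ n))) := fun n =>
    exists_smul_J _ _ (hreg _) (nearest_orth γ hγ (p (σ n)) (a (σ n)) (hmin _ _ (hda (σ n))))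
  choose u hu using hun
  have hBd : ∀ n, dist (p (σ n)) (γ (B n)) = Metric.infDist (p (σ n)) (Set.range γ) := fun n => by
    rw [hγB n]; exact hdb (σ n)
  have hvn : ∀ n, ∃ v : ℝ, p (σ n) - γ (B n) = v • J (deriv γ (B n)) := fun n =>
    exists_smul_J _ _ (hreg _) (nearest_orth γ hγ _ _ (hmin _ _ (hBd n)))
  choose v hv using hvn
  have hJcont : Continuous (fun t => J (deriv γ t)) := J.continuous.comp hd2.continuous
  have hJt0 : J (deriv γ t0) ≠ 0 := by
    intro h
    apply hreg t0
    have h0 := congrArg (fun x : Plane => x 0) h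
    have h1 := congrArg (fun x : Plane => x 1) h
    simp only [J_apply_0, J_apply_1, PiLp.zero_apply, neg_eq_zero] at h0 h1
    ext i
    fin_cases i
    · simpa using h1
    · simpa using h0
  have hxnormB : Tendsto (fun n => ‖p (σ n) - γ (B n)‖) atTop (𝓝 0) := by
    have : ∀ n, ‖p (σ n) - γ (B n)‖ = Metric.infDist (p (σ n)) (Set.range γ) := fun n => by
      rw [← hBd n, dist_eq_norm]
    simpa only [this] using hdlim
  have hulim : Tendsto u atTop (𝓝 0) :=
    coeff_tendsto_zero ((hJcont.tendsto t0).comp hAlim) hJt0 hxnormA hu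
  have hvlim : Tendsto v atTop (𝓝 0) :=
    coeff_tendsto_zero ((hJcont.tendsto t0).comp hBlim) hJt0 hxnormB hv
  obtain ⟨U, hU, hUinj⟩ := local_inj γ hγ hreg t0
  have h1 : Tendsto (fun n => ((a (σ n), u n) : ℝ × ℝ)) atTop (𝓝 (t0, 0)) :=
    hAlim.prodMk_nhds hulim
  have h2 : Tendsto (fun n => ((B n, v n) : ℝ × ℝ)) atTop (𝓝 (t0, 0)) :=
    hBlim.prodMk_nhds hvlim
  obtain ⟨n, hn1, hn2⟩ := ((h1.eventually_mem hU).and (h2.eventually_mem hU)).exists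
  have hFeq : (fun q : ℝ × ℝ => γ q.1 + q.2 • J (deriv γ q.1)) (a (σ n), u n)
      = (fun q : ℝ × ℝ => γ q.1 + q.2 • J (deriv γ q.1)) (B n, v n) := by
    simp only
    rw [← hu n, ← hv n]
    abel
  have heq := hUinj hn1 hn2 hFeq
  have hab' : a (σ n) = B n := congrArg Prod.fst heq
  exact hab (σ n) (by rw [hab', hγB n])
end
end

section
/- Let U := {z : ℂ | 0 < Complex.abs z ∧ Complex.abs z < 1} be the punctured open unit disc. If f : ℂ → ℂ is holomorphic on U (DifferentiableOn ℂ f U) and maps U bijectively onto U (Set.BijOn f U U), then there exists a ∈ ℂ with Complex.abs a = 1 such that f(z) = a * z for all z ∈ U. That is, every conformal automorphism of the punctured unit disc is a rotation about the origin. -/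
open Complex Metric Set Filter Topology

/-- Every conformal automorphism of the punctured open unit disc is a rotation about
the origin. -/
theorem conformal_automorphism_punctured_disc_is_rotation
    (f : ℂ → ℂ)
    (hf : DifferentiableOn ℂ f {z : ℂ | 0 < ‖z‖ ∧ ‖z‖ < 1})
    (hbij : Set.BijOn f {z : ℂ | 0 < ‖z‖ ∧ ‖z‖ < 1}
      {z : ℂ | 0 < ‖z‖ ∧ ‖z‖ < 1}) :
    ∃ a : ℂ, ‖a‖ = 1 ∧
      ∀ z ∈ {z : ℂ | 0 < ‖z‖ ∧ ‖z‖ < 1}, f z = a * z := by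
  have hUeq : {z : ℂ | 0 < ‖z‖ ∧ ‖z‖ < 1} = ball (0 : ℂ) 1 \ {0} := by
    ext z
    simp [mem_ball_zero_iff, norm_pos_iff, and_comm]
  rw [hUeq] at hf hbij ⊢
  set U : Set ℂ := ball (0 : ℂ) 1 \ {0} with hU_def
  set B : Set ℂ := ball (0 : ℂ) 1 with hB_def
  have hUB : U ⊆ B := diff_subset
  have hBnhds : B ∈ 𝓝 (0 : ℂ) := isOpen_ball.mem_nhds (mem_ball_self one_pos)
  have hmemU : ∀ z : ℂ, z ∈ B → z ≠ 0 → z ∈ U := fun z hz hz0 => ⟨hz, hz0⟩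
  have hUne : ∀ z ∈ U, z ≠ (0:ℂ) := fun z hz => hz.2
  -- the extension g of f across 0
  set g : ℂ → ℂ := Function.update f 0 (limUnder (𝓝[≠] 0) f) with hg_def
  have hgf : EqOn g f U := fun z hz => Function.update_of_ne (hUne z hz) _ _
  have hg : DifferentiableOn ℂ g B := by
    apply Complex.differentiableOn_update_limUnder_of_bddAbove hBnhds hf
    refine ⟨1, ?_⟩
    rintro y ⟨z, hz, rfl⟩
    have := (hbij.mapsTo hz).1
    simpa [mem_ball_zero_iff] using le_of_lt (by simpa [mem_ball_zero_iff] using this)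
  have hganal : AnalyticOnNhd ℂ g B := hg.analyticOnNhd isOpen_ball
  -- transfer of bijectivity to g
  have hmapsU : MapsTo g U U := fun z hz => by rw [hgf hz]; exact hbij.mapsTo hz
  have hinjU : InjOn g U := fun x hx y hy h => hbij.injOn hx hy (by rwa [← hgf hx, ← hgf hy])
  have hsurjU : SurjOn g U U := fun w hw => by
    obtain ⟨z, hz, rfl⟩ := hbij.surjOn hw
    exact ⟨z, hz, (hgf hz)⟩
  -- g is nonconstant
  have hhalf : (1/2 : ℂ) ∈ U := by
    constructor
    · simp [mem_ball_zero_iff]; norm_num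
    · norm_num
  have hquarter : (1/4 : ℂ) ∈ U := by
    constructor
    · simp [mem_ball_zero_iff]; norm_num
    · norm_num
  have hnc : ¬∃ w, ∀ z ∈ B, g z = w := by
    rintro ⟨w, hw⟩
    have h1 := hw _ (hUB hhalf)
    have h2 := hw _ (hUB hquarter)
    have : (1/2 : ℂ) = 1/4 := hinjU hhalf hquarter (h1.trans h2.symm)
    norm_num at this
  have hopen : ∀ s ⊆ B, IsOpen s → IsOpen (g '' s) :=
    (hganal.is_constant_or_isOpen (convex_ball _ _).isPreconnected).resolve_left hnc
  -- |g 0| ≤ 1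
  have hUnhds : 𝓝[U] (0:ℂ) = 𝓝[≠] (0:ℂ) := by
    rw [hU_def, diff_eq]
    exact nhdsWithin_inter_of_mem (mem_nhdsWithin_of_mem_nhds hBnhds)
  have htg : Tendsto g (𝓝[U] 0) (𝓝 (g 0)) :=
    ((hg.differentiableAt hBnhds).continuousAt).continuousWithinAt.tendsto
  have hg0le : ‖g 0‖ ≤ 1 := by
    have hne : (𝓝[U] (0:ℂ)).NeBot := by rw [hUnhds]; infer_instance
    refine le_of_tendsto ((continuous_norm.tendsto _).comp htg) ?_
    filter_upwards [self_mem_nhdsWithin] with z hz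
    exact le_of_lt (by simpa [mem_ball_zero_iff] using (hmapsU hz).1)
  -- g 0 = 0
  have hg0 : g 0 = 0 := by
    by_contra h0
    rcases lt_or_eq_of_le hg0le with hlt | heq1
    · -- 0 < |g 0| < 1 : g 0 ∈ U, contradiction via open mapping + injectivity
      have hw : g 0 ∈ U := ⟨by simpa [mem_ball_zero_iff] using hlt, h0⟩
      obtain ⟨z₀, hz₀, hgz₀⟩ := hsurjU hw
      have hz₀0 : z₀ ≠ 0 := hUne _ hz₀
      have hz₀abs : 0 < ‖z₀‖ := by simpa [norm_pos_iff] using hz₀0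
      have hz₀lt : ‖z₀‖ < 1 := by simpa [mem_ball_zero_iff] using hz₀.1
      set ε : ℝ := min (‖z₀‖ / 2) (1 - ‖z₀‖) with hε_def
      have hε : 0 < ε := lt_min (by linarith) (by linarith)
      have hball0 : ball (0:ℂ) ε ⊆ B := by
        apply ball_subset_ball
        have : ‖z₀‖ / 2 < 1 := by linarith
        exact le_of_lt (lt_of_le_of_lt (min_le_left _ _) this)
      have hballz₀ : ball z₀ ε ⊆ B := by
        rw [hB_def]
        apply ball_subset_ball'
        have := min_le_right (‖z₀‖ / 2) (1 - ‖z₀‖)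
        simp only [dist_zero_right]
        linarith
      have hO : IsOpen (g '' ball 0 ε ∩ g '' ball z₀ ε) :=
        (hopen _ hball0 isOpen_ball).inter (hopen _ hballz₀ isOpen_ball)
      have hwO : g 0 ∈ g '' ball 0 ε ∩ g '' ball z₀ ε :=
        ⟨⟨0, mem_ball_self hε, rfl⟩, ⟨z₀, mem_ball_self hε, hgz₀⟩⟩
      obtain ⟨r, hr, hrsub⟩ := isOpen_iff.1 hO _ hwO
      have hvO : g 0 + (r/2 : ℝ) ∈ g '' ball 0 ε ∩ g '' ball z₀ ε := by
        apply hrsub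
        simp only [mem_ball, dist_eq_norm]
        rw [add_sub_cancel_left]
        simp [Complex.norm_real, abs_of_pos hr]
        linarith
      have hvne : g 0 + (r/2 : ℝ) ≠ g 0 := by
        intro h
        have : ((r/2 : ℝ) : ℂ) = 0 := by linear_combination h
        simp at this
        linarith
      obtain ⟨⟨x, hx, hgx⟩, ⟨y, hy, hgy⟩⟩ := hvO
      have hx0 : x ≠ 0 := by
        rintro rfl
        exact hvne hgx.symm
      have hxU : x ∈ U := hmemU x (hball0 hx) hx0
      have hyU : y ∈ U := hmemU y (hballz₀ hy) (by
        intro h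
        rw [h] at hy
        rw [mem_ball, dist_zero_left] at hy
        have := min_le_left (‖z₀‖ / 2) (1 - ‖z₀‖)
        rw [hε_def] at hy
        linarith [lt_of_lt_of_le hy this])
      have hxy : x ≠ y := by
        rintro rfl
        rw [mem_ball, dist_zero_right] at hx
        rw [mem_ball, dist_comm, dist_eq_norm] at hy
        have h3 : ‖z₀‖ ≤ ‖x‖ + ‖z₀ - x‖ :=
          by simpa using norm_add_le x (z₀ - x)
        have := min_le_left (‖z₀‖ / 2) (1 - ‖z₀‖)
        rw [hε_def] at hx hy
        linarith [lt_of_lt_of_le hx this, lt_of_lt_of_le hy this]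
      exact hxy (hbij.injOn hxU hyU (by rw [← hgf hxU, ← hgf hyU, hgx, hgy]))
    · -- |g 0| = 1 : maximum modulus ⇒ g constant, contradiction
      have hmax : IsMaxOn (norm ∘ g) B 0 := by
        intro z hz
        simp only [Function.comp_apply, Set.mem_setOf_eq, heq1]
        rcases eq_or_ne z 0 with rfl | hz0
        · exact hg0le
        · exact le_of_lt (by simpa [mem_ball_zero_iff] using (hmapsU ⟨hz, hz0⟩).1)
      have hconst := Complex.eqOn_of_isPreconnected_of_isMaxOn_norm
        (convex_ball _ _).isPreconnected isOpen_ball hg (by simp [hB_def]) hmax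
      have h1 := hconst (hUB hhalf)
      have habs : ‖g (1/2)‖ < 1 := by
        simpa [mem_ball_zero_iff] using (hmapsU hhalf).1
      rw [h1, ← heq1] at habs
      exact lt_irrefl _ habs
  -- g : B → B bijectively
  have hmapsB : MapsTo g B B := by
    intro z hz
    rcases eq_or_ne z 0 with rfl | hz0
    · rw [hg0]; simp [hB_def]
    · exact hUB (hmapsU ⟨hz, hz0⟩)
  have hinjB : InjOn g B := by
    intro x hx y hy h
    rcases eq_or_ne x 0 with rfl | hx0 <;> rcases eq_or_ne y 0 with rfl | hy0
    · rfl
    · exact absurd (h ▸ hg0 : g y = 0) (hUne _ (hmapsU ⟨hy, hy0⟩))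
    · exact absurd (h.symm ▸ hg0 : g x = 0) (hUne _ (hmapsU ⟨hx, hx0⟩))
    · exact hinjU ⟨hx, hx0⟩ ⟨hy, hy0⟩ h
  have hsurjB : SurjOn g B B := by
    intro w hw
    rcases eq_or_ne w 0 with rfl | hw0
    · exact ⟨0, by simp [hB_def], hg0⟩
    · obtain ⟨z, hz, hgz⟩ := hsurjU ⟨hw, hw0⟩
      exact ⟨z, hUB hz, hgz⟩
  have hbijB : BijOn g B B := ⟨hmapsB, hinjB, hsurjB⟩
  -- the inverse function k
  set k : ℂ → ℂ := Function.invFunOn g B with hk_def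
  have hInv : InvOn k g B B := hbijB.invOn_invFunOn
  have hkg : ∀ z ∈ B, k (g z) = z := fun z hz => hInv.1 hz
  have hgk : ∀ w ∈ B, g (k w) = w := fun w hw => hInv.2 hw
  have hkbij : BijOn k B B := Set.BijOn.symm hInv.symm hbijB
  have hkmem : ∀ w ∈ B, k w ∈ B := fun w hw => hkbij.mapsTo hw
  -- k is continuous on B
  have hkcontAt : ∀ w ∈ B, ContinuousAt k w := by
    intro w hw
    rw [ContinuousAt, _root_.tendsto_nhds]
    intro V hV hkV
    have hopenV : IsOpen (g '' (V ∩ B)) := hopen _ inter_subset_right (hV.inter isOpen_ball)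
    have hmem : w ∈ g '' (V ∩ B) := ⟨k w, ⟨hkV, hkmem w hw⟩, hgk w hw⟩
    refine mem_of_superset (hopenV.mem_nhds hmem) ?_
    rintro y ⟨z, ⟨hzV, hzB⟩, rfl⟩
    simpa [hkg z hzB] using hzV
  -- k is differentiable at points where the derivative of g is nonzero
  have hkdiffAt : ∀ w ∈ B, deriv g (k w) ≠ 0 → DifferentiableAt ℂ k w := by
    intro w hw hne
    have hder : HasDerivAt g (deriv g (k w)) (k w) :=
      (hg.differentiableAt (isOpen_ball.mem_nhds (hkmem w hw))).hasDerivAt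
    have hev : ∀ᶠ y in 𝓝 w, g (k y) = y :=
      Filter.eventually_of_mem (isOpen_ball.mem_nhds hw) (fun y hy => hgk y hy)
    exact (HasDerivAt.of_local_left_inverse (hkcontAt w hw) hder hne hev).differentiableAt
  -- k is differentiable everywhere on B
  have hkdiff : DifferentiableOn ℂ k B := by
    intro w hw
    apply DifferentiableAt.differentiableWithinAt
    rcases ne_or_eq (deriv g (k w)) 0 with hne | hzero
    · exact hkdiffAt w hw hne
    · -- removable-singularity argument at w
      set z₀ : ℂ := k w with hz₀_def
      have hz₀B : z₀ ∈ B := hkmem w hw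
      have hderiv_anal : AnalyticAt ℂ (deriv g) z₀ := hganal.deriv z₀ hz₀B
      have hiso : ∀ᶠ z in 𝓝[≠] z₀, deriv g z ≠ 0 := by
        rcases hderiv_anal.eventually_eq_zero_or_eventually_ne_zero with hzero' | hne'
        · -- deriv g vanishes near z₀ ⇒ g locally constant ⇒ contradicts injectivity
          exfalso
          obtain ⟨r, hr, hrsub⟩ := isOpen_iff.1 isOpen_ball z₀ hz₀B
          obtain ⟨r', hr', hrsub'⟩ := Metric.eventually_nhds_iff_ball.1 hzero'
          set ρ := min r r' with hρ_def
          have hρ : 0 < ρ := lt_min hr hr'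
          have hsub : ball z₀ ρ ⊆ B := (ball_subset_ball (min_le_left _ _)).trans hrsub
          have hconst : g (z₀ + ρ/2) = g z₀ := by
            have hdiff' : DifferentiableOn ℂ g (ball z₀ ρ) := hg.mono hsub
            have hzero2 : ∀ x ∈ ball z₀ ρ, fderivWithin ℂ g (ball z₀ ρ) x = 0 := by
              intro x hx
              rw [fderivWithin_of_isOpen isOpen_ball hx, ← toSpanSingleton_deriv,
                hrsub' x (lt_of_lt_of_le (mem_ball.1 hx) (min_le_right _ _))]
              ext y
              simp
            apply Convex.is_const_of_fderivWithin_eq_zero (convex_ball _ _) hdiff' hzero2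
            · rw [mem_ball]
              simp only [dist_self_add_left]
              simp [Complex.norm_real, abs_of_pos hρ]
              linarith
            · exact mem_ball_self hρ
          have hne2 : z₀ + (ρ:ℂ)/2 ≠ z₀ := by
            intro h
            have h2 : (ρ:ℂ) = 0 := by linear_combination 2*h
            simp at h2; linarith
          apply hne2
          apply hinjB _ hz₀B hconst
          apply hsub
          rw [mem_ball]
          simp only [dist_self_add_left]
          simp [Complex.norm_real, abs_of_pos hρ]
          linarith
        · exact hne'
      have htk : Tendsto k (𝓝[≠] w) (𝓝[≠] z₀) := by
        rw [tendsto_nhdsWithin_iff]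
        constructor
        · exact ((hkcontAt w hw).tendsto).mono_left nhdsWithin_le_nhds
        · filter_upwards [eventually_mem_nhdsWithin,
            nhdsWithin_le_nhds (isOpen_ball.mem_nhds hw)] with y hy hyB
          intro h
          apply hy
          have : g (k y) = g z₀ := by rw [h]
          rw [hgk y hyB, hz₀_def, hgk w hw] at this
          simp [this]
      have hpunct : ∀ᶠ y in 𝓝[≠] w, DifferentiableAt ℂ k y := by
        filter_upwards [htk.eventually hiso,
          nhdsWithin_le_nhds (isOpen_ball.mem_nhds hw)] with y h1 h2
        exact hkdiffAt y h2 h1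
      exact (Complex.analyticAt_of_differentiable_on_punctured_nhds_of_continuousAt
        hpunct (hkcontAt w hw)).differentiableAt
  -- k 0 = 0
  have h0B : (0:ℂ) ∈ B := by simp [hB_def]
  have hk0 : k 0 = 0 := hinjB (hkmem 0 h0B) h0B (by rw [hgk 0 h0B, hg0])
  -- Schwarz in both directions
  have hmapsB' : MapsTo g (ball (0:ℂ) 1) (ball (g 0) 1) := by rw [hg0]; exact hmapsB
  have hmapsBk : MapsTo k (ball (0:ℂ) 1) (ball (k 0) 1) := by rw [hk0]; exact hkbij.mapsTo
  have habs_g : ∀ z : ℂ, ‖z‖ < 1 → ‖g z‖ ≤ ‖z‖ :=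
    fun z hz => Complex.norm_le_norm_of_mapsTo_ball hg (hmapsB.mono_right ball_subset_closedBall) hg0 hz
  have habs_k : ∀ z : ℂ, ‖z‖ < 1 → ‖k z‖ ≤ ‖z‖ :=
    fun z hz => Complex.norm_le_norm_of_mapsTo_ball hkdiff (hkbij.mapsTo.mono_right ball_subset_closedBall) hk0 hz
  have habslt : ∀ z : ℂ, z ∈ B → ‖z‖ < 1 := fun z hz => by
    simpa using mem_ball_zero_iff.1 hz
  have habs_eq : ∀ z ∈ B, ‖g z‖ = ‖z‖ := by
    intro z hz
    have hz1 : ‖z‖ < 1 := habslt z hz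
    refine le_antisymm (habs_g z hz1) ?_
    have hgz1 : ‖g z‖ < 1 := habslt _ (hmapsB hz)
    calc ‖z‖ = ‖k (g z)‖ := by rw [hkg z hz]
    _ ≤ ‖g z‖ := habs_k _ hgz1
  -- equality case of Schwarz at z = 1/2
  have hz₀B : (1/2 : ℂ) ∈ ball (0:ℂ) 1 := hUB hhalf
  have hdslope : ‖dslope g 0 (1/2 : ℂ)‖ = 1 / 1 := by
    rw [dslope_of_ne _ (by norm_num : (1/2 : ℂ) ≠ 0), slope_def_module]
    rw [norm_smul, norm_inv]
    have h1 : ‖g (1/2)‖ = 1/2 := by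
      rw [habs_eq _ hz₀B]
      rw [show ((1:ℂ)/2) = ((1/2 : ℝ) : ℂ) by norm_num, Complex.norm_real]
      norm_num
    rw [hg0, sub_zero, sub_zero, h1]
    rw [show ((1:ℂ)/2) = ((1/2 : ℝ) : ℂ) by norm_num, Complex.norm_real, Real.norm_eq_abs,
      abs_of_pos (by norm_num : (0:ℝ) < 1/2)]
    norm_num
  obtain ⟨C, hC, hEq⟩ := Complex.affine_of_mapsTo_ball_of_exists_norm_dslope_eq_div'
    hg (hmapsB'.mono_right ball_subset_closedBall) ⟨(1/2 : ℂ), hz₀B, hdslope⟩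
  refine ⟨C, by simpa using hC, fun z hz => ?_⟩
  have := hEq (hUB hz)
  rw [hgf hz] at this
  rw [this]
  simp [hg0, smul_eq_mul, mul_comm]
end

section
/- Let D ⊆ ℝ² (with ℝ² = EuclideanSpace ℝ (Fin 2)) be a Jordan domain, i.e., the image of a continuous injective map f : B² → ℝ² where B² = Metric.closedBall 0 1. Then every continuous map g : ℝ² → ℝ² with g '' D ⊆ D has a fixed point in D: there exists p ∈ D with g(p) = p. In particular, every isometric equivalence ρ of ℝ² with ρ '' D = D fixes a point of D. -/
noncomputable section

open Set Metric Complex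

namespace BrouwerAux


/-! ### Gluing continuous functions on adjacent intervals -/

lemma glue {f g : ℝ → ℂ} {a b c : ℝ} (hab : a ≤ b) (hbc : b ≤ c)
    (hf : ContinuousOn f (Icc a b)) (hg : ContinuousOn g (Icc b c)) (hfg : f b = g b) :
    ContinuousOn (fun t => if t ≤ b then f t else g t) (Icc a c) := by
  have h1 : (Iic b).ite (Icc a b) (Icc b c) = Icc a c := by
    rw [Set.ite]
    have h2 : Icc a b ∩ Iic b = Icc a b :=
      inter_eq_self_of_subset_left (fun x hx => hx.2)
    have h3 : Icc b c \ Iic b = Ioc b c := by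
      ext x; simp only [mem_diff, mem_Icc, mem_Iic, mem_Ioc, not_le]
      constructor
      · rintro ⟨⟨_, h⟩, h'⟩; exact ⟨h', h⟩
      · rintro ⟨h, h'⟩; exact ⟨⟨le_of_lt h, h'⟩, h⟩
    rw [h2, h3, Icc_union_Ioc_eq_Icc hab hbc]
  have hfr : frontier (Iic b) = {b} := frontier_Iic
  have key := continuousOn_piecewise_ite (t := Iic b) hf hg
    (by rw [hfr]; ext x
        simp only [mem_inter_iff, mem_singleton_iff, mem_Icc]
        constructor
        · rintro ⟨_, rfl⟩; exact ⟨⟨le_rfl, hbc⟩, rfl⟩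
        · rintro ⟨_, rfl⟩; exact ⟨⟨hab, le_rfl⟩, rfl⟩)
    (by intro x hx
        rw [hfr] at hx
        have hxb : x = b := hx.2
        rw [hxb]; exact hfg)
  rw [h1] at key
  have heq : (fun t => if t ≤ b then f t else g t) = (Iic b).piecewise f g := by
    funext x
    simp [Set.piecewise, mem_Iic]
  rw [heq]
  exact key

/-- A complex number within distance 1 of 1 lies in the slit plane. -/
lemma near_one_mem_slitPlane {w : ℂ} (h : ‖w - 1‖ < 1) : w ∈ slitPlane := by
  rw [Complex.mem_slitPlane_iff]
  left
  have h1 : |(w - 1).re| ≤ ‖w - 1‖ := Complex.abs_re_le_norm (w - 1)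
  rw [Complex.sub_re, Complex.one_re] at h1
  have := abs_lt.mp (h1.trans_lt h)
  linarith [this.1]

/-! ### Existence of continuous logarithms (path lifting for `exp`) -/

lemma exists_lift (γ : ℝ → ℂ) (hc : ContinuousOn γ (Icc 0 1))
    (h0 : ∀ t ∈ Icc (0:ℝ) 1, γ t ≠ 0) :
    ∃ L : ℝ → ℂ, ContinuousOn L (Icc 0 1) ∧ ∀ t ∈ Icc (0:ℝ) 1, Complex.exp (L t) = γ t := by
  -- minimum of ‖γ‖
  obtain ⟨t₀, ht₀, hmin'⟩ := isCompact_Icc.exists_isMinOn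
    (nonempty_Icc.mpr zero_le_one) (hc.norm)
  have hmin : ∀ t ∈ Icc (0:ℝ) 1, ‖γ t₀‖ ≤ ‖γ t‖ := fun t ht => hmin' ht
  set m : ℝ := ‖γ t₀‖ with hm
  have mpos : 0 < m := norm_pos_iff.mpr (h0 t₀ ht₀)
  -- uniform continuity
  have hu := (isCompact_Icc.uniformContinuousOn_of_continuous hc)
  rw [Metric.uniformContinuousOn_iff] at hu
  obtain ⟨δ, δpos, hδ⟩ := hu m mpos
  obtain ⟨n, hn⟩ := exists_nat_one_div_lt δpos
  set N : ℕ := n + 1 with hN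
  have hNpos : (0:ℝ) < N := by positivity
  have hNδ : (1:ℝ) / N < δ := by
    rw [hN]; push_cast; exact hn
  -- key: nearby points give ratio in the slit plane
  have key : ∀ a ∈ Icc (0:ℝ) 1, ∀ t ∈ Icc (0:ℝ) 1, dist t a < δ → ‖γ t / γ a - 1‖ < 1 := by
    intro a ha t ht hd
    have h1 : ‖γ t - γ a‖ < m := by
      have := hδ t ht a ha hd
      rwa [dist_eq_norm] at this
    have h2 : m ≤ ‖γ a‖ := hmin a ha
    rw [div_sub_one (h0 a ha), norm_div]
    rw [div_lt_one (lt_of_lt_of_le mpos h2)]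
    exact lt_of_lt_of_le h1 h2
  -- inductive construction
  have main : ∀ k : ℕ, k ≤ N → ∃ L : ℝ → ℂ,
      ContinuousOn L (Icc 0 ((k:ℝ)/N)) ∧
      ∀ t ∈ Icc (0:ℝ) ((k:ℝ)/N), Complex.exp (L t) = γ t := by
    intro k
    induction k with
    | zero =>
      intro _
      refine ⟨fun _ => Complex.log (γ 0), continuousOn_const, ?_⟩
      intro t ht
      simp only [Nat.cast_zero, zero_div, Icc_self, mem_singleton_iff] at ht
      rw [ht]
      exact Complex.exp_log (h0 0 ⟨le_rfl, zero_le_one⟩)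
    | succ k ih =>
      intro hk
      obtain ⟨L, hLc, hLe⟩ := ih (Nat.le_of_succ_le hk)
      set a : ℝ := (k:ℝ)/N with ha
      set b : ℝ := ((k+1:ℕ):ℝ)/N with hb
      have ha0 : (0:ℝ) ≤ a := by positivity
      have hab : a ≤ b := by
        rw [ha, hb]
        gcongr
        push_cast
        linarith
      have hb1 : b ≤ 1 := by
        rw [hb, div_le_one hNpos]
        exact_mod_cast hk
      have ha1 : a ≤ 1 := hab.trans hb1
      have haI : a ∈ Icc (0:ℝ) 1 := ⟨ha0, ha1⟩
      have hba : b - a = 1 / N := by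
        rw [ha, hb, div_sub_div_same]; push_cast; ring_nf
      have hclose : ∀ t ∈ Icc a b, dist t a < δ := by
        intro t ht
        rw [Real.dist_eq]
        have hta : 0 ≤ t - a := by linarith [ht.1]
        rw [_root_.abs_of_nonneg hta]
        calc t - a ≤ b - a := by linarith [ht.2]
        _ = 1 / N := hba
        _ < δ := hNδ
      have hIccsub : Icc a b ⊆ Icc (0:ℝ) 1 := Icc_subset_Icc ha0 hb1
      have hexpa : Complex.exp (L a) = γ a := hLe a ⟨ha0, le_rfl⟩
      have hratio : ∀ t ∈ Icc a b, ‖γ t / γ a - 1‖ < 1 := fun t ht =>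
        key a haI t (hIccsub ht) (hclose t ht)
      have hrne : ∀ t ∈ Icc a b, γ t / γ a ≠ 0 := by
        intro t ht h
        have := hratio t ht
        rw [h] at this
        simp at this
      refine ⟨fun t => if t ≤ a then L t else L a + Complex.log (γ t / γ a), ?_, ?_⟩
      · apply glue ha0 hab hLc
        · apply ContinuousOn.add continuousOn_const
          apply ContinuousOn.clog
          · exact ((hc.mono hIccsub).div continuousOn_const
              (fun t ht => h0 a haI))
          · exact fun t ht => near_one_mem_slitPlane (hratio t ht)
        · rw [div_self (h0 a haI), Complex.log_one, add_zero]
      · intro t ht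
        by_cases h : t ≤ a
        · simp only [h, if_true]
          exact hLe t ⟨ht.1, h⟩
        · simp only [h, if_false]
          push_neg at h
          have htI : t ∈ Icc a b := ⟨h.le, ht.2⟩
          rw [Complex.exp_add, hexpa, Complex.exp_log (hrne t htI)]
          exact mul_div_cancel₀ (γ t) (h0 a haI)
  obtain ⟨L, hLc, hLe⟩ := main N le_rfl
  have : ((N:ℝ))/N = 1 := div_self (ne_of_gt hNpos)
  rw [this] at hLc hLe
  exact ⟨L, hLc, hLe⟩

/-! ### Winding numbers -/

def IsLiftOf (L γ : ℝ → ℂ) : Prop :=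
  ContinuousOn L (Icc 0 1) ∧ ∀ t ∈ Icc (0:ℝ) 1, Complex.exp (L t) = γ t

open Classical in
noncomputable def wind (γ : ℝ → ℂ) : ℝ :=
  if h : ∃ L, IsLiftOf L γ then ((h.choose 1 - h.choose 0).im) / (2 * Real.pi) else 0

/-- A continuous function on `[0,1]` with values in `2πℤ` takes the same value at the
endpoints. -/
lemma int_endpoints {u : ℝ → ℝ} (hu : ContinuousOn u (Icc 0 1))
    (hval : ∀ t ∈ Icc (0:ℝ) 1, ∃ k : ℤ, u t = 2 * Real.pi * k) : u 0 = u 1 := by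
  have pi_pos := Real.pi_pos
  by_contra hne
  obtain ⟨k0, hk0⟩ := hval 0 ⟨le_rfl, zero_le_one⟩
  obtain ⟨k1, hk1⟩ := hval 1 ⟨zero_le_one, le_rfl⟩
  have key : ∀ c : ℝ, c ∈ Icc (u 0) (u 1) ∪ Icc (u 1) (u 0) → ∃ k : ℤ, c = 2 * Real.pi * k := by
    intro c hc
    rcases hc with hc | hc
    · obtain ⟨t, ht, htc⟩ := intermediate_value_Icc zero_le_one hu hc
      obtain ⟨k, hk⟩ := hval t ht
      exact ⟨k, by rw [← htc, hk]⟩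
    · obtain ⟨t, ht, htc⟩ := intermediate_value_Icc' zero_le_one hu hc
      obtain ⟨k, hk⟩ := hval t ht
      exact ⟨k, by rw [← htc, hk]⟩
  rcases lt_or_gt_of_ne hne with h | h
  · have hkk : k0 < k1 := by
      rw [hk0, hk1] at h
      have := (mul_lt_mul_iff_right₀ (by positivity : (0:ℝ) < 2 * Real.pi)).mp h
      exact_mod_cast this
    have hge : u 0 + 2 * Real.pi ≤ u 1 := by
      rw [hk0, hk1]
      have : (k0:ℝ) + 1 ≤ k1 := by exact_mod_cast hkk
      nlinarith
    obtain ⟨k, hk⟩ := key (u 0 + Real.pi) (Or.inl ⟨by linarith, by linarith⟩)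
    rw [hk0] at hk
    have : (2:ℝ) * k = 2 * k0 + 1 := by
      have h2 : Real.pi * (2*(k:ℝ)) = Real.pi * (2*(k0:ℝ)+1) := by
        ring_nf
        ring_nf at hk
        linarith
      exact mul_left_cancel₀ Real.pi_ne_zero h2
    have : (2 * k : ℤ) = 2 * k0 + 1 := by exact_mod_cast this
    omega
  · have hkk : k1 < k0 := by
      rw [hk0, hk1] at h
      have := (mul_lt_mul_iff_right₀ (by positivity : (0:ℝ) < 2 * Real.pi)).mp h
      exact_mod_cast this
    have hge : u 1 + 2 * Real.pi ≤ u 0 := by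
      rw [hk0, hk1]
      have : (k1:ℝ) + 1 ≤ k0 := by exact_mod_cast hkk
      nlinarith
    obtain ⟨k, hk⟩ := key (u 1 + Real.pi) (Or.inr ⟨by linarith, by linarith⟩)
    rw [hk1] at hk
    have : (2:ℝ) * k = 2 * k1 + 1 := by
      have h2 : Real.pi * (2*(k:ℝ)) = Real.pi * (2*(k1:ℝ)+1) := by
        ring_nf
        ring_nf at hk
        linarith
      exact mul_left_cancel₀ Real.pi_ne_zero h2
    have : (2 * k : ℤ) = 2 * k1 + 1 := by exact_mod_cast this
    omega

lemma im_of_exp_eq_one {z : ℂ} (h : Complex.exp z = 1) : ∃ k : ℤ, z.im = 2 * Real.pi * k := by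
  obtain ⟨k, hk⟩ := Complex.exp_eq_one_iff.mp h
  refine ⟨k, ?_⟩
  rw [hk]
  simp [Complex.mul_im, Complex.mul_re]
  ring

/-- The winding number is independent of the choice of lift. -/
lemma wind_eq {γ L : ℝ → ℂ} (hL : IsLiftOf L γ) :
    wind γ = (L 1 - L 0).im / (2 * Real.pi) := by
  have hex : ∃ L', IsLiftOf L' γ := ⟨L, hL⟩
  rw [wind, dif_pos hex]
  obtain ⟨hLc', hLe'⟩ := hex.choose_spec
  obtain ⟨hLc, hLe⟩ := hL
  set L' := hex.choose with hL'
  have hd : ∀ t ∈ Icc (0:ℝ) 1, ∃ k : ℤ, (L' t - L t).im = 2 * Real.pi * k := by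
    intro t ht
    apply im_of_exp_eq_one
    rw [Complex.exp_sub, hLe' t ht, hLe t ht, div_self]
    rw [← hLe t ht]
    exact Complex.exp_ne_zero _
  have hu : ContinuousOn (fun t => (L' t - L t).im) (Icc 0 1) :=
    Complex.continuous_im.comp_continuousOn (hLc'.sub hLc)
  have := int_endpoints hu hd
  have h0 : (0:ℝ) ∈ Icc (0:ℝ) 1 := ⟨le_rfl, zero_le_one⟩
  have h1 : (1:ℝ) ∈ Icc (0:ℝ) 1 := ⟨zero_le_one, le_rfl⟩
  simp only [Complex.sub_im] at this ⊢
  congr 1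
  linarith

lemma wind_loop_int {γ L : ℝ → ℂ} (hL : IsLiftOf L γ) (hloop : γ 0 = γ 1) :
    ∃ k : ℤ, wind γ = k := by
  have h0 : (0:ℝ) ∈ Icc (0:ℝ) 1 := ⟨le_rfl, zero_le_one⟩
  have h1 : (1:ℝ) ∈ Icc (0:ℝ) 1 := ⟨zero_le_one, le_rfl⟩
  have hexp : Complex.exp (L 1 - L 0) = 1 := by
    rw [Complex.exp_sub, hL.2 1 h1, hL.2 0 h0, ← hloop, div_self]
    rw [← hL.2 0 h0]
    exact Complex.exp_ne_zero _
  obtain ⟨k, hk⟩ := im_of_exp_eq_one hexp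
  refine ⟨k, ?_⟩
  rw [wind_eq hL, hk]
  field_simp

lemma wind_const {γ : ℝ → ℂ} {c : ℂ} (hc : c ≠ 0) (h : ∀ t ∈ Icc (0:ℝ) 1, γ t = c) :
    wind γ = 0 := by
  have hL : IsLiftOf (fun _ => Complex.log c) γ :=
    ⟨continuousOn_const, fun t ht => by rw [h t ht]; exact Complex.exp_log hc⟩
  rw [wind_eq hL]
  simp

lemma wind_circle {γ : ℝ → ℂ}
    (h : ∀ t ∈ Icc (0:ℝ) 1, γ t = Complex.exp (2 * Real.pi * Complex.I * t)) :
    wind γ = 1 := by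
  have hL : IsLiftOf (fun t : ℝ => 2 * Real.pi * Complex.I * t) γ := by
    constructor
    · exact (Continuous.continuousOn (by continuity))
    · exact fun t ht => (h t ht).symm
  rw [wind_eq hL]
  have : ((2 * (Real.pi:ℂ) * Complex.I * ((1:ℝ):ℂ)) - (2 * (Real.pi:ℂ) * Complex.I * ((0:ℝ):ℂ))).im
      = 2 * Real.pi := by
    simp [Complex.mul_im, Complex.mul_re]
  rw [this]
  field_simp

/-- Uniformly close loops (with proportionally equal endpoints) have the same winding
number. -/
lemma wind_close {γ₀ γ₁ : ℝ → ℂ}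
    (hc0 : ContinuousOn γ₀ (Icc 0 1)) (hn0 : ∀ t ∈ Icc (0:ℝ) 1, γ₀ t ≠ 0)
    (hc1 : ContinuousOn γ₁ (Icc 0 1))
    (hclose : ∀ t ∈ Icc (0:ℝ) 1, ‖γ₁ t - γ₀ t‖ < ‖γ₀ t‖)
    (hq : γ₁ 0 / γ₀ 0 = γ₁ 1 / γ₀ 1) :
    wind γ₁ = wind γ₀ := by
  obtain ⟨L₀, hL₀c, hL₀e⟩ := exists_lift γ₀ hc0 hn0
  have hr : ∀ t ∈ Icc (0:ℝ) 1, ‖γ₁ t / γ₀ t - 1‖ < 1 := by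
    intro t ht
    rw [div_sub_one (hn0 t ht), norm_div, div_lt_one (norm_pos_iff.mpr (hn0 t ht))]
    exact hclose t ht
  have hslit : ∀ t ∈ Icc (0:ℝ) 1, γ₁ t / γ₀ t ∈ Complex.slitPlane :=
    fun t ht => near_one_mem_slitPlane (hr t ht)
  have hrne : ∀ t ∈ Icc (0:ℝ) 1, γ₁ t / γ₀ t ≠ 0 :=
    fun t ht => Complex.slitPlane_ne_zero (hslit t ht)
  have hL₁ : IsLiftOf (fun t => L₀ t + Complex.log (γ₁ t / γ₀ t)) γ₁ := by
    constructor
    · exact hL₀c.add (ContinuousOn.clog (hc1.div hc0 hn0) hslit)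
    · intro t ht
      rw [Complex.exp_add, hL₀e t ht, Complex.exp_log (hrne t ht), mul_comm,
        div_mul_cancel₀ _ (hn0 t ht)]
  rw [wind_eq hL₁, wind_eq ⟨hL₀c, hL₀e⟩]
  have heq : (L₀ 1 + Complex.log (γ₁ 1 / γ₀ 1)) - (L₀ 0 + Complex.log (γ₁ 0 / γ₀ 0))
      = L₀ 1 - L₀ 0 := by rw [hq]; ring
  rw [heq]

/-- Homotopy invariance of the winding number. -/
lemma wind_homotopy (H : ℝ → ℝ → ℂ)
    (hH : ContinuousOn (fun p : ℝ × ℝ => H p.1 p.2) (Icc 0 1 ×ˢ Icc 0 1))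
    (hne : ∀ s ∈ Icc (0:ℝ) 1, ∀ t ∈ Icc (0:ℝ) 1, H s t ≠ 0)
    (hloop : ∀ s ∈ Icc (0:ℝ) 1, H s 0 = H s 1) :
    wind (H 0) = wind (H 1) := by
  have h0I : (0:ℝ) ∈ Icc (0:ℝ) 1 := ⟨le_rfl, zero_le_one⟩
  have h1I : (1:ℝ) ∈ Icc (0:ℝ) 1 := ⟨zero_le_one, le_rfl⟩
  have hcont : ∀ s ∈ Icc (0:ℝ) 1, ContinuousOn (H s) (Icc 0 1) := by
    intro s hs
    have hmk : ContinuousOn (fun t : ℝ => ((s, t) : ℝ × ℝ)) (Icc 0 1) :=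
      (Continuous.continuousOn (by continuity))
    exact hH.comp hmk (fun t ht => Set.mk_mem_prod hs ht)
  have hint : ∀ s ∈ Icc (0:ℝ) 1, ∃ k : ℤ, wind (H s) = k := by
    intro s hs
    obtain ⟨L, hL⟩ := exists_lift _ (hcont s hs) (hne s hs)
    exact wind_loop_int hL (hloop s hs)
  have hloc : ∀ s₀ ∈ Icc (0:ℝ) 1, ∃ ε > 0, ∀ s ∈ Icc (0:ℝ) 1,
      |s - s₀| < ε → wind (H s) = wind (H s₀) := by
    intro s₀ hs₀
    obtain ⟨t₀, ht₀, hmin'⟩ := isCompact_Icc.exists_isMinOn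
      (nonempty_Icc.mpr zero_le_one) ((hcont s₀ hs₀).norm)
    set m : ℝ := ‖H s₀ t₀‖ with hm
    have mpos : 0 < m := norm_pos_iff.mpr (hne s₀ hs₀ t₀ ht₀)
    have hu := ((isCompact_Icc.prod isCompact_Icc).uniformContinuousOn_of_continuous hH)
    rw [Metric.uniformContinuousOn_iff] at hu
    obtain ⟨δ, δpos, hδ⟩ := hu m mpos
    refine ⟨δ, δpos, ?_⟩
    intro s hs hd
    apply wind_close (hcont s₀ hs₀) (hne s₀ hs₀) (hcont s hs)
    · intro t ht
      have hd' : dist ((s, t) : ℝ × ℝ) ((s₀, t) : ℝ × ℝ) < δ := by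
        rw [Prod.dist_eq]
        simp only [dist_self]
        rw [Real.dist_eq]
        exact max_lt hd δpos
      have := hδ (s, t) (Set.mk_mem_prod hs ht) (s₀, t) (Set.mk_mem_prod hs₀ ht) hd'
      rw [dist_eq_norm] at this
      exact lt_of_lt_of_le this (hmin' ht)
    · rw [hloop s hs, hloop s₀ hs₀]
  set u : ℝ → ℝ := fun s => 2 * Real.pi * wind (H s) with hudef
  have hucont : ContinuousOn u (Icc 0 1) := by
    intro s₀ hs₀
    obtain ⟨ε, εpos, hε⟩ := hloc s₀ hs₀
    have hev : u =ᶠ[nhdsWithin s₀ (Icc 0 1)] (fun _ => u s₀) := by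
      have hball : Metric.ball s₀ ε ∈ nhdsWithin s₀ (Icc (0:ℝ) 1) :=
        mem_nhdsWithin_of_mem_nhds (Metric.ball_mem_nhds s₀ εpos)
      filter_upwards [hball, self_mem_nhdsWithin] with s hs1 hs2
      rw [hudef]
      simp only []
      rw [hε s hs2 (by rw [← Real.dist_eq]; exact hs1)]
    exact (continuousWithinAt_const (b := u s₀)).congr_of_eventuallyEq hev rfl
  have huval : ∀ t ∈ Icc (0:ℝ) 1, ∃ k : ℤ, u t = 2 * Real.pi * k := by
    intro t ht
    obtain ⟨k, hk⟩ := hint t ht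
    exact ⟨k, by rw [hudef]; simp only []; rw [hk]⟩
  have := int_endpoints hucont huval
  rw [hudef] at this
  simp only [] at this
  have hπ : (2:ℝ) * Real.pi ≠ 0 := by positivity
  exact mul_left_cancel₀ hπ this

/-! ### Brouwer fixed point theorem for the closed unit disk in `ℂ` -/

theorem brouwer_cpx (G : ℂ → ℂ) (hG : Continuous G)
    (hmap : ∀ z : ℂ, ‖z‖ ≤ 1 → ‖G z‖ ≤ 1) :
    ∃ z : ℂ, ‖z‖ ≤ 1 ∧ G z = z := by
  by_contra hfix
  push_neg at hfix
  set e : ℝ → ℂ := fun t => Complex.exp (2 * Real.pi * Complex.I * t) with he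
  have hec : Continuous e := by
    rw [he]; continuity
  have henorm : ∀ t : ℝ, ‖e t‖ = 1 := by
    intro t
    rw [he]
    simp only [Complex.norm_exp]
    have : (2 * (Real.pi:ℂ) * Complex.I * (t:ℂ)).re = 0 := by
      simp [Complex.mul_re, Complex.mul_im]
    rw [this, Real.exp_zero]
  have heloop : e 0 = e 1 := by
    rw [he]
    simp only [Complex.ofReal_zero, Complex.ofReal_one, mul_zero, mul_one, Complex.exp_zero]
    rw [show (2:ℂ) * Real.pi * Complex.I = 2 * Real.pi * Complex.I by ring,
      Complex.exp_two_pi_mul_I]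
  set H : ℝ → ℝ → ℂ := fun s t =>
    if s ≤ 1/2 then ((2*s : ℝ) : ℂ) * e t - G (((2*s : ℝ) : ℂ) * e t)
    else e t - ((2 - 2*s : ℝ) : ℂ) * G (e t) with hHdef
  have hsc : Continuous (fun p : ℝ × ℝ => (((2 * p.1 : ℝ)) : ℂ)) := by continuity
  have hpec : Continuous (fun p : ℝ × ℝ => e p.2) := hec.comp continuous_snd
  have hHc : Continuous (fun p : ℝ × ℝ => H p.1 p.2) := by
    rw [hHdef]
    simp only []
    apply Continuous.if_le
    · exact (hsc.mul hpec).sub (hG.comp (hsc.mul hpec))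
    · refine Continuous.sub hpec (Continuous.mul ?_ (hG.comp hpec))
      continuity
    · exact continuous_fst
    · exact continuous_const
    · intro p hp
      rw [hp]
      norm_num
  have hne : ∀ s ∈ Icc (0:ℝ) 1, ∀ t ∈ Icc (0:ℝ) 1, H s t ≠ 0 := by
    intro s hs t _ h
    by_cases hs2 : s ≤ 1/2
    · rw [hHdef] at h
      simp only [hs2, if_true] at h
      have hz : ‖((2*s:ℝ):ℂ) * e t‖ ≤ 1 := by
        rw [norm_mul, henorm, mul_one, Complex.norm_real, Real.norm_eq_abs,
          _root_.abs_of_nonneg (by linarith [hs.1] : (0:ℝ) ≤ 2*s)]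
        linarith
      exact hfix _ hz (sub_eq_zero.mp h).symm
    · push_neg at hs2
      rw [hHdef] at h
      simp only [not_le.mpr hs2, if_false] at h
      have h1 : e t = ((2 - 2*s:ℝ):ℂ) * G (e t) := sub_eq_zero.mp h
      have hG1 : ‖G (e t)‖ ≤ 1 := hmap _ (le_of_eq (henorm t))
      have hnn : (0:ℝ) ≤ 2 - 2*s := by linarith [hs.2]
      have h2 : (1:ℝ) = (2 - 2*s) * ‖G (e t)‖ := by
        have h3 := congrArg norm h1
        rwa [norm_mul, Complex.norm_real, Real.norm_eq_abs, _root_.abs_of_nonneg hnn,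
          henorm t] at h3
      nlinarith [norm_nonneg (G (e t))]
  have hloop : ∀ s ∈ Icc (0:ℝ) 1, H s 0 = H s 1 := by
    intro s _
    by_cases h : s ≤ 1/2 <;>
      simp only [hHdef, h, if_true, if_false, heloop]
  have hG0 : G 0 ≠ 0 := fun h => hfix 0 (by norm_num) h
  have w0 : wind (H 0) = 0 := by
    apply wind_const (c := -G 0) (neg_ne_zero.mpr hG0)
    intro t _
    rw [hHdef]
    norm_num
  have w1 : wind (H 1) = 1 := by
    apply wind_circle
    intro t _
    rw [hHdef]
    norm_num [he]
  have := wind_homotopy H hHc.continuousOn hne hloop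
  rw [w0, w1] at this
  norm_num at this

/-- Brouwer fixed point theorem for the closed unit disk, subtype version. -/
theorem brouwer_disk (k : Metric.closedBall (0:ℂ) 1 → Metric.closedBall (0:ℂ) 1)
    (hk : Continuous k) : ∃ z, k z = z := by
  have hmax : ∀ z : ℂ, (0:ℝ) < max 1 ‖z‖ := fun z => lt_of_lt_of_le one_pos (le_max_left _ _)
  set r : ℂ → Metric.closedBall (0:ℂ) 1 := fun z =>
    ⟨(max 1 ‖z‖)⁻¹ • z, by
      rw [Metric.mem_closedBall, dist_zero_right, norm_smul, norm_inv, Real.norm_eq_abs,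
        _root_.abs_of_pos (hmax z)]
      rw [inv_mul_le_iff₀ (hmax z), mul_one]
      exact le_max_right _ _⟩ with hrdef
  have hr : Continuous r := by
    apply Continuous.subtype_mk
    exact ((continuous_const.max continuous_norm).inv₀
      (fun z => ne_of_gt (hmax z))).smul continuous_id
  set G : ℂ → ℂ := fun z => (k (r z) : ℂ) with hGdef
  have hGc : Continuous G := continuous_subtype_val.comp (hk.comp hr)
  have hGmap : ∀ z : ℂ, ‖z‖ ≤ 1 → ‖G z‖ ≤ 1 := by
    intro z _
    have := (k (r z)).2
    rwa [Metric.mem_closedBall, dist_zero_right] at this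
  obtain ⟨z, hz1, hz2⟩ := brouwer_cpx G hGc hGmap
  have hrz : (r z : ℂ) = z := by
    rw [hrdef]
    simp only []
    rw [max_eq_left hz1]
    simp
  refine ⟨r z, Subtype.ext ?_⟩
  show (k (r z) : ℂ) = (r z : ℂ)
  rw [hrz]
  exact hz2

end BrouwerAux

/-- Brouwer fixed point theorem for Jordan domains: any continuous self-map of a Jordan
domain in the plane has a fixed point; in particular any isometric equivalence mapping
the domain onto itself fixes one of its points. -/
theorem jordan_domain_fixed_point
    (D : Set Plane) (hD : IsJordanDomain D) :
    (∀ g : Plane → Plane, Continuous g → g '' D ⊆ D → ∃ p ∈ D, g p = p) ∧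
    (∀ ρ : Plane ≃ᵢ Plane, ⇑ρ '' D = D → ∃ p ∈ D, ρ p = p) := by
  obtain ⟨f, hfc, hfi, hfD⟩ := hD
  have hpart1 : ∀ g : Plane → Plane, Continuous g → g '' D ⊆ D → ∃ p ∈ D, g p = p := by
    intro g hg hgD
    have hB2 : IsCompact B2 := isCompact_closedBall 0 1
    have : CompactSpace ↥B2 := isCompact_iff_compactSpace.mp hB2
    have hbij : Set.BijOn f B2 D :=
      ⟨fun x hx => hfD ▸ Set.mem_image_of_mem f hx, hfi, by rw [Set.SurjOn, hfD]⟩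
    let e : ↥B2 ≃ ↥D := Set.BijOn.equiv f hbij
    have hec : Continuous e := by
      show Continuous (hbij.mapsTo.restrict f B2 D)
      exact hfc.mapsToRestrict hbij.mapsTo
    let φ : ↥B2 ≃ₜ ↥D := Continuous.homeoOfEquivCompactToT2 (f := e) hec
    let ι : ℂ ≃ₗᵢ[ℝ] Plane := Complex.orthonormalBasisOneI.repr
    have himg : (ι.toHomeomorph) '' (Metric.closedBall (0:ℂ) 1) = B2 := by
      show ι.toIsometryEquiv '' Metric.closedBall (0:ℂ) 1 = B2
      rw [IsometryEquiv.image_closedBall]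
      show Metric.closedBall (ι 0) 1 = B2
      rw [map_zero]
      rfl
    let ψ : ↥(Metric.closedBall (0:ℂ) 1) ≃ₜ ↥B2 :=
      (ι.toHomeomorph.image (Metric.closedBall (0:ℂ) 1)).trans (Homeomorph.setCongr himg)
    let χ : ↥(Metric.closedBall (0:ℂ) 1) ≃ₜ ↥D := ψ.trans φ
    let k : ↥D → ↥D := fun y => ⟨g y, hgD ⟨(y : Plane), y.2, rfl⟩⟩
    have hkc : Continuous k := (hg.comp continuous_subtype_val).subtype_mk _
    obtain ⟨z, hz⟩ := BrouwerAux.brouwer_disk (χ.symm ∘ k ∘ χ)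
      (χ.symm.continuous.comp (hkc.comp χ.continuous))
    refine ⟨((χ z : ↥D) : Plane), (χ z).2, ?_⟩
    have hfixed : k (χ z) = χ z := by
      have h2 := congrArg χ hz
      simpa using h2
    exact congrArg Subtype.val hfixed
  refine ⟨hpart1, ?_⟩
  intro ρ hρ
  exact hpart1 ρ ρ.continuous (le_of_eq hρ)
end
end
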